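/- arXiv:2103.09175 — 10 statements merged into one kernel-verified Lean document; each statement's English description precedes it below -/
import Mathlib

section
/- Recursion for the matrix Σ_{p,m}: for every integer m ≥ p+2, writing v ∈ ℝ^{m−1} for the vector with v_i = φ_i for 1 ≤ i ≤ p and v_i = 0 for p+1 ≤ i ≤ m−1, the matrix Σ_{p,m} has the block form: its (1,1) entry equals 1, its first row (excluding the (1,1) entry) equals −vᵀ, its first column (excluding the (1,1) entry) equals −v, and its lower-right (m−1)×(m−1) block equals Σ_{p,m−1} + v vᵀ. -/
open Matrix Finset

set_option maxHeartbeats 1000000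

lemma sum_split {M : Type*} [AddCommMonoid M] (m : ℕ) (hm : 1 ≤ m) (f : Fin m → M) :
    ∑ j, f j = f ⟨0, hm⟩ + ∑ k : Fin (m-1), f ⟨(k:ℕ)+1, by have := k.isLt; omega⟩ := by
  obtain ⟨n, rfl⟩ : ∃ n, m = n+1 := ⟨m-1, by omega⟩
  rw [Fin.sum_univ_succ]
  rfl

lemma key_sum (n p : ℕ) (hp : p ≤ n) (φ : ℕ → ℝ) (g : ℤ → ℝ) :
    ∑ k : Fin n, (if (k:ℕ)+1 ≤ p then φ ((k:ℕ)+1) else 0) * g (((k:ℕ):ℤ)+1)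
      = ∑ i ∈ Icc 1 p, φ i * g (i:ℤ) := by
  rw [Fin.sum_univ_eq_sum_range (fun k => (if k+1 ≤ p then φ (k+1) else 0) * g ((k:ℤ)+1))]
  rw [← Finset.sum_subset (Finset.range_subset_range.2 hp)
    (fun x _ hx => by simp only [mem_range, not_lt] at hx; rw [if_neg (by omega), zero_mul])]
  refine Finset.sum_nbij' (fun k => k+1) (fun i => i-1) ?_ ?_ ?_ ?_ ?_
  · intro a ha; simp only [mem_range] at ha; simp only [mem_Icc]; omega
  · intro a ha; simp only [mem_Icc] at ha; simp only [mem_range]; omega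
  · intro a _; omega
  · intro a ha; simp only [mem_Icc] at ha; omega
  · intro a ha
    simp only [mem_range] at ha
    rw [if_pos (by omega)]
    push_cast
    ring_nf

/-- Context: AR(p) coefficients `φ`, white-noise variance `σ2`, autocovariance
sequence `γ` satisfying the Yule–Walker equations, and the autocovariance
Toeplitz matrices `Γ m`, assumed positive definite for `m ≥ 1`. -/
theorem stmt_2
    (p : ℕ) (hp : 1 ≤ p)
    (φ : ℕ → ℝ)
    (σ2 : ℝ) (hσ : 0 < σ2)
    (γ : ℤ → ℝ)
    (hsym : ∀ j : ℤ, γ (-j) = γ j)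
    (hYW0 : γ 0 = (∑ i ∈ Finset.Icc 1 p, φ i * γ (i : ℤ)) + σ2)
    (hYW : ∀ j : ℤ, 1 ≤ j → γ j = ∑ i ∈ Finset.Icc 1 p, φ i * γ (j - (i : ℤ)))
    (Γ : (m : ℕ) → Matrix (Fin m) (Fin m) ℝ)
    (hΓ : ∀ m : ℕ, ∀ i j : Fin m, Γ m i j = γ |(i : ℤ) - (j : ℤ)|)
    (hpd : ∀ m : ℕ, 1 ≤ m → (Γ m).PosDef)
    (m : ℕ) (hm : p + 2 ≤ m) :
    let S : Matrix (Fin m) (Fin m) ℝ := σ2 • (Γ m)⁻¹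
    let S2 : Matrix (Fin (m - 1)) (Fin (m - 1)) ℝ := σ2 • (Γ (m - 1))⁻¹
    let v : Fin (m - 1) → ℝ := fun k => if (k : ℕ) + 1 ≤ p then φ ((k : ℕ) + 1) else 0
    let e : Fin (m - 1) → Fin m := fun k => ⟨(k : ℕ) + 1, by have := k.isLt; omega⟩
    S ⟨0, by omega⟩ ⟨0, by omega⟩ = 1 ∧
    (∀ j : Fin (m - 1), S ⟨0, by omega⟩ (e j) = -(v j)) ∧
    (∀ i : Fin (m - 1), S (e i) ⟨0, by omega⟩ = -(v i)) ∧
    (∀ i j : Fin (m - 1), S (e i) (e j) = S2 i j + v i * v j) := by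
  intro S S2 v e
  have hm1 : 1 ≤ m := by omega
  have hm1' : 1 ≤ m - 1 := by omega
  have habs : ∀ x : ℤ, γ |x| = γ x := by
    intro x
    rcases abs_choice x with h | h
    · rw [h]
    · rw [h]; exact hsym x
  have hG : ∀ (n : ℕ) (i j : Fin n), Γ n i j = γ ((i:ℤ) - j) := by
    intro n i j; rw [hΓ, habs]
  -- candidate matrix
  set B : Matrix (Fin m) (Fin m) ℝ := fun i j =>
    if hi : (i:ℕ) = 0 then
      (if hj : (j:ℕ) = 0 then 1 else -(v ⟨(j:ℕ)-1, by have := j.isLt; omega⟩))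
    else if hj : (j:ℕ) = 0 then -(v ⟨(i:ℕ)-1, by have := i.isLt; omega⟩)
    else S2 ⟨(i:ℕ)-1, by have := i.isLt; omega⟩ ⟨(j:ℕ)-1, by have := j.isLt; omega⟩
      + v ⟨(i:ℕ)-1, by have := i.isLt; omega⟩ * v ⟨(j:ℕ)-1, by have := j.isLt; omega⟩
    with hBdef
  have hB00 : B ⟨0, by omega⟩ ⟨0, by omega⟩ = 1 := by simp [hBdef]
  have hsub : ∀ k : Fin (m-1), (⟨((e k : Fin m):ℕ)-1, by have := (e k).isLt; omega⟩ : Fin (m-1)) = k := by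
    intro k; apply Fin.ext; simp [e]
  have hB0e : ∀ k : Fin (m-1), B ⟨0, hm1⟩ (e k) = -(v k) := by
    intro k
    show dite _ _ _ = _
    rw [dif_pos rfl, dif_neg (by simp [e]), hsub]
  have hBe0 : ∀ k : Fin (m-1), B (e k) ⟨0, hm1⟩ = -(v k) := by
    intro k
    show dite _ _ _ = _
    rw [dif_neg (by simp [e]), dif_pos rfl, hsub]
  have hBee : ∀ i j : Fin (m-1), B (e i) (e j) = S2 i j + v i * v j := by
    intro i j
    show dite _ _ _ = _
    rw [dif_neg (by simp [e]), dif_neg (by simp [e]), hsub, hsub]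
  have hval : ∀ k : Fin (m-1), ((e k : Fin m) : ℤ) = ((k:ℕ):ℤ)+1 := by
    intro k; simp [e]
  -- splitting sums over Fin m
  have hsplit : ∀ f : Fin m → ℝ, ∑ j, f j = f ⟨0, hm1⟩ + ∑ k : Fin (m-1), f (e k) := by
    intro f; rw [sum_split m hm1]
  -- v-sums
  have hvg : ∀ (c : ℤ), ∑ k : Fin (m-1), v k * γ ((((k:ℕ):ℤ)+1) - c)
      = ∑ i ∈ Icc 1 p, φ i * γ ((i:ℤ) - c) := by
    intro c; exact key_sum (m-1) p (by omega) φ (fun x => γ (x - c))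
  have hvg2 : ∀ (c : ℤ), ∑ k : Fin (m-1), v k * γ (c - (((k:ℕ):ℤ)+1))
      = ∑ i ∈ Icc 1 p, φ i * γ (c - (i:ℤ)) := by
    intro c; exact key_sum (m-1) p (by omega) φ (fun x => γ (c - x))
  -- symmetry of the Icc sums
  have hflip : ∀ (c : ℤ), ∑ i ∈ Icc 1 p, φ i * γ ((i:ℤ) - c) = ∑ i ∈ Icc 1 p, φ i * γ (c - (i:ℤ)) := by
    intro c
    refine Finset.sum_congr rfl fun i _ => ?_
    rw [show (i:ℤ) - c = -(c - i) by ring, hsym]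
  -- invertibility of Γ (m-1)
  have hinv2 : (Γ (m-1))⁻¹ * Γ (m-1) = 1 :=
    Matrix.nonsing_inv_mul _ (hpd (m-1) hm1').det_pos.ne'.isUnit
  have hS2Γ : S2 * Γ (m-1) = σ2 • (1 : Matrix (Fin (m-1)) (Fin (m-1)) ℝ) := by
    simp only [S2, Matrix.smul_mul, hinv2]
  -- Γ (m-1) * v = (γ (k+1))_k
  have hΓv : (Γ (m-1)).mulVec v = fun k : Fin (m-1) => γ (((k:ℕ):ℤ)+1) := by
    funext k
    show ∑ l : Fin (m-1), Γ (m-1) k l * v l = γ (((k:ℕ):ℤ)+1)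
    have hterm : ∀ l : Fin (m-1), Γ (m-1) k l * v l
        = v l * γ ((((k:ℕ):ℤ)+1) - (((l:ℕ):ℤ)+1)) := by
      intro l
      rw [hG, mul_comm]
      congr 1
      ring
    rw [Finset.sum_congr rfl (fun l _ => hterm l), hvg2]
    exact (hYW (((k:ℕ):ℤ)+1) (by omega)).symm
  -- the weighted column sums
  have hw : ∀ i' : Fin (m-1), ∑ k : Fin (m-1), S2 i' k * γ (((k:ℕ):ℤ)+1) = σ2 * v i' := by
    intro i'
    have hSw : S2.mulVec (fun k : Fin (m-1) => γ (((k:ℕ):ℤ)+1)) = σ2 • v := by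
      rw [← hΓv, Matrix.mulVec_mulVec, hS2Γ, Matrix.smul_mulVec, Matrix.one_mulVec]
    have := congrFun hSw i'
    simpa [Matrix.mulVec, dotProduct] using this
  have e0 : (((⟨0, hm1⟩ : Fin m) : ℕ) : ℤ) = 0 := by norm_num
  -- case analysis on indices of Fin m
  have hcases : ∀ i : Fin m, i = ⟨0, hm1⟩ ∨ ∃ i' : Fin (m-1), i = e i' := by
    intro i
    by_cases h : (i:ℕ) = 0
    · exact Or.inl (Fin.ext h)
    · exact Or.inr ⟨⟨(i:ℕ)-1, by have := i.isLt; omega⟩, Fin.ext (by simp [e]; omega)⟩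
  -- the key identity B * Γ m = σ2 • 1
  have hmul : B * Γ m = σ2 • (1 : Matrix (Fin m) (Fin m) ℝ) := by
    ext i j
    rw [Matrix.mul_apply, hsplit]
    rcases hcases i with hi | ⟨i', rfl⟩
    · subst hi
      rw [hB00, one_mul, hG]
      have hterm : ∀ k : Fin (m-1), B ⟨0,hm1⟩ (e k) * Γ m (e k) j
          = -(v k * γ ((((k:ℕ):ℤ)+1) - (j:ℤ))) := by
        intro k
        rw [hB0e, hG, hval]
        ring
      rw [Finset.sum_congr rfl (fun k _ => hterm k), Finset.sum_neg_distrib, hvg]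
      rcases hcases j with hj | ⟨j', rfl⟩
      · subst hj
        rw [e0]
        simp only [Matrix.smul_apply, Matrix.one_apply_eq, smul_eq_mul, mul_one]
        simp only [zero_sub, neg_zero, sub_zero]
        linarith [hYW0]
      · have hJ : (1:ℤ) ≤ ((e j' : Fin m) : ℤ) := by rw [hval]; omega
        rw [hflip, e0, zero_sub, hsym, hYW _ hJ]
        have : (⟨0, hm1⟩ : Fin m) ≠ e j' := by
          intro h; have := congrArg Fin.val h; simp [e] at this
        simp [Matrix.one_apply, this]
    · -- row e i'
      rw [hBe0, hG]
      have hterm : ∀ k : Fin (m-1), B (e i') (e k) * Γ m (e k) j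
          = S2 i' k * γ ((((k:ℕ):ℤ)+1) - (j:ℤ)) + v i' * (v k * γ ((((k:ℕ):ℤ)+1) - (j:ℤ))) := by
        intro k
        rw [hBee, hG, hval]
        ring
      rw [Finset.sum_congr rfl (fun k _ => hterm k), Finset.sum_add_distrib, ← Finset.mul_sum, hvg]
      rcases hcases j with hj | ⟨j', rfl⟩
      · subst hj
        rw [e0]
        simp only [sub_zero, zero_sub, neg_zero]  -- fix args
        rw [hw i']
        have hne : e i' ≠ (⟨0, hm1⟩ : Fin m) := by
          intro h; have := congrArg Fin.val h; simp [e] at this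
        simp only [Matrix.smul_apply, Matrix.one_apply_ne hne, smul_eq_mul, mul_zero]
        rw [hYW0]
        ring
      · -- j = e j'
        have hterm2 : ∀ k : Fin (m-1), S2 i' k * γ ((((k:ℕ):ℤ)+1) - ((e j' : Fin m):ℤ))
            = S2 i' k * Γ (m-1) k j' := by
          intro k
          rw [hG, hval]
          congr 2
          ring
        rw [Finset.sum_congr rfl (fun k _ => hterm2 k), ← Matrix.mul_apply, hS2Γ]
        have hJ : (1:ℤ) ≤ ((e j' : Fin m) : ℤ) := by rw [hval]; omega
        rw [hflip, e0, zero_sub, hsym, hYW _ hJ]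
        have hiff : e i' = e j' ↔ i' = j' := by
          constructor
          · intro h; have := congrArg Fin.val h; simp [e] at this; exact Fin.ext this
          · intro h; rw [h]
        by_cases hij : i' = j'
        · subst hij
          simp [Matrix.one_apply, Matrix.smul_apply]
        · simp [Matrix.one_apply, Matrix.smul_apply, hij, (hiff.not.2 hij : ¬ e i' = e j')]
  -- conclude S = B
  have hSB : S = B := by
    have h1 : (σ2⁻¹ • B) * Γ m = 1 := by
      rw [Matrix.smul_mul, hmul, smul_smul, inv_mul_cancel₀ hσ.ne', one_smul]
    have h2 : (Γ m)⁻¹ = σ2⁻¹ • B := Matrix.inv_eq_left_inv h1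
    show σ2 • (Γ m)⁻¹ = B
    rw [h2, smul_smul, mul_inv_cancel₀ hσ.ne', one_smul]
  refine ⟨?_, ?_, ?_, ?_⟩
  · rw [hSB]; exact hB00
  · intro j; rw [hSB]; exact hB0e j
  · intro i; rw [hSB]; exact hBe0 i
  · intro i j; rw [hSB]; exact hBee i j
end

section
/- Recursion for the determinant of the autocovariance matrix: for every integer m ≥ p+1, det(Γ_m) = σ² · det(Γ_{m−1}). -/
open Matrix Finset

/-- Context: AR(p) coefficients `φ`, white-noise variance `σ2`, autocovariance
sequence `γ` satisfying the Yule–Walker equations, and the autocovariance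
Toeplitz matrices `Γ m`, assumed positive definite for `m ≥ 1`. -/
theorem stmt_3
    (p : ℕ) (hp : 1 ≤ p)
    (φ : ℕ → ℝ)
    (σ2 : ℝ) (hσ : 0 < σ2)
    (γ : ℤ → ℝ)
    (hsym : ∀ j : ℤ, γ (-j) = γ j)
    (hYW0 : γ 0 = (∑ i ∈ Finset.Icc 1 p, φ i * γ (i : ℤ)) + σ2)
    (hYW : ∀ j : ℤ, 1 ≤ j → γ j = ∑ i ∈ Finset.Icc 1 p, φ i * γ (j - (i : ℤ)))
    (Γ : (m : ℕ) → Matrix (Fin m) (Fin m) ℝ)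
    (hΓ : ∀ m : ℕ, ∀ i j : Fin m, Γ m i j = γ |(i : ℤ) - (j : ℤ)|)
    (hpd : ∀ m : ℕ, 1 ≤ m → (Γ m).PosDef)
    (m : ℕ) (hm : p + 1 ≤ m) :
    (Γ m).det = σ2 * (Γ (m - 1)).det := by
  obtain ⟨n, rfl⟩ : ∃ n, m = n + 1 := ⟨m - 1, by omega⟩
  have hpn : p ≤ n := by omega
  have habs : ∀ x : ℤ, γ |x| = γ x := by
    intro x
    rcases abs_choice x with h | h
    · rw [h]
    · rw [h, hsym]
  -- the index set of rows 1..p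
  set s : Finset (Fin (n + 1)) :=
    Finset.univ.filter (fun k => 1 ≤ (k : ℕ) ∧ (k : ℕ) ≤ p) with hs
  have h0s : (0 : Fin (n + 1)) ∉ s := by simp [hs]
  -- transfer sums over s to sums over Icc 1 p
  have key : ∀ f : ℕ → ℝ, ∑ k ∈ s, f (k : ℕ) = ∑ i ∈ Finset.Icc 1 p, f i := by
    intro f
    refine Finset.sum_bij' (i := fun (k : Fin (n+1)) (_ : k ∈ s) => (k : ℕ))
      (j := fun (i : ℕ) (hi : i ∈ Finset.Icc 1 p) =>
        (⟨i, by simp only [Finset.mem_Icc] at hi; omega⟩ : Fin (n + 1)))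
      ?_ ?_ ?_ ?_ ?_
    · intro k hk
      simp only [hs, Finset.mem_filter] at hk
      simp [Finset.mem_Icc, hk.2.1, hk.2.2]
    · intro i hi
      simp only [Finset.mem_Icc] at hi
      simp [hs, hi.1, hi.2]
    · intro k hk; exact Fin.ext rfl
    · intro i hi; rfl
    · intro k hk; rfl
  -- the new first row
  set r : Fin (n + 1) → ℝ :=
    (1 : ℝ) • (Γ (n + 1)) 0 + ∑ k ∈ s, (fun k : Fin (n + 1) => -φ (k : ℕ)) k • (Γ (n + 1)) k
    with hr
  have e0 : ((((0 : Fin (n+1))) : ℕ) : ℤ) = 0 := by simp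
  have hrval : ∀ j : Fin (n + 1), r j = if j = 0 then σ2 else 0 := by
    intro j
    have hrj : r j = γ (j : ℤ) + ∑ i ∈ Finset.Icc 1 p, (-φ i * γ (|(i : ℤ) - (j : ℤ)|)) := by
      simp only [hr, Pi.add_apply, Pi.smul_apply, one_smul, Finset.sum_apply, smul_eq_mul]
      rw [hΓ (n+1) 0 j]
      have : |((0 : Fin (n+1)) : ℤ) - (j : ℤ)| = (j : ℤ) := by
        rw [e0]; simp [abs_of_nonneg]
      rw [this]
      congr 1
      rw [← key (fun i => -φ i * γ (|(i : ℤ) - (j : ℤ)|))]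
      apply Finset.sum_congr rfl
      intro k hk
      rw [hΓ (n+1) k j]
    by_cases hj : j = 0
    · subst hj
      rw [if_pos rfl, hrj]
      have hterm : ∀ i ∈ Finset.Icc 1 p, -φ i * γ (|(i : ℤ) - (((0:Fin (n+1)) : ℕ) : ℤ)|)
          = -(φ i * γ (i : ℤ)) := by
        intro i hi
        have : |(i : ℤ) - (((0:Fin (n+1)) : ℕ) : ℤ)| = (i : ℤ) := by
          rw [e0]; simp [abs_of_nonneg]
        rw [this]; ring
      rw [Finset.sum_congr rfl hterm, e0, hYW0]
      simp
    · rw [if_neg hj, hrj]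
      have hj1 : 1 ≤ (j : ℤ) := by
        have : (j : ℕ) ≠ 0 := fun h => hj (Fin.ext h)
        omega
      have hterm : ∀ i ∈ Finset.Icc 1 p, -φ i * γ (|(i : ℤ) - (j : ℤ)|)
          = -(φ i * γ ((j : ℤ) - (i : ℤ))) := by
        intro i hi
        have h1 : γ (|(i : ℤ) - (j : ℤ)|) = γ ((j : ℤ) - (i : ℤ)) := by
          rw [habs, ← hsym]; ring_nf
        rw [h1]; ring
      rw [Finset.sum_congr rfl hterm, Finset.sum_neg_distrib, ← hYW (j : ℤ) hj1]
      ring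
  -- the row operation does not change the determinant
  have hdet1 : ((Γ (n+1)).updateRow 0 r).det = (Γ (n+1)).det := by
    rw [hr, Matrix.det_updateRow_sum_aux (Γ (n+1)) s h0s _ 1, one_smul]
  have hsub : ((Γ (n+1)).updateRow 0 r).submatrix Fin.succ Fin.succ = Γ n := by
    ext i j
    simp only [Matrix.submatrix_apply]
    rw [Matrix.updateRow_ne (Fin.succ_ne_zero i), hΓ (n+1), hΓ n]
    congr 1
    simp only [Fin.val_succ]
    push_cast
    ring_nf
  have hexp : ((Γ (n+1)).updateRow 0 r).det = σ2 * (Γ n).det := by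
    rw [Matrix.det_succ_row_zero]
    rw [Finset.sum_eq_single 0]
    · rw [Matrix.updateRow_self, hrval 0, if_pos rfl]
      rw [Fin.succAbove_zero, hsub]
      simp
    · intro b _ hb
      rw [Matrix.updateRow_self, hrval b, if_neg hb]
      ring
    · intro h; exact absurd (Finset.mem_univ 0) h
  show (Γ (n+1)).det = σ2 * (Γ n).det
  rw [← hdet1]
  exact hexp
end

section
/- Iterated determinant formula: for every integer m ≥ p, det(Γ_m) = σ^{2(m−p)} · det(Γ_p). -/
open Matrix Finset

/-- Row operation: adding to row `j` a linear combination (indexed by a `Finset ℕ`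
mapped through `f`) of other rows does not change the determinant. -/
lemma det_updateRow_add_sum_aux {n : ℕ} (M : Matrix (Fin n) (Fin n) ℝ) (j : Fin n)
    (s : Finset ℕ) (f : ℕ → Fin n) (hf : ∀ i ∈ s, f i ≠ j) (c : ℕ → ℝ) :
    (M.updateRow j (M j + ∑ k ∈ s, c k • M (f k))).det = M.det := by
  induction s using Finset.induction_on with
  | empty => simp
  | @insert k t hk ih =>
      have hfk : f k ≠ j := hf k (Finset.mem_insert_self _ _)
      rw [Finset.sum_insert hk, add_comm (c k • M (f k)), ← add_assoc,
        Matrix.det_updateRow_add, Matrix.det_updateRow_smul,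
        Matrix.det_updateRow_eq_zero hfk, mul_zero, add_zero]
      exact ih fun i hi => hf i (Finset.mem_insert_of_mem hi)

/-- Context: AR(p) coefficients `φ`, white-noise variance `σ2`, autocovariance
sequence `γ` satisfying the Yule–Walker equations, and the autocovariance
Toeplitz matrices `Γ m`, assumed positive definite for `m ≥ 1`. -/
theorem stmt_4
    (p : ℕ) (hp : 1 ≤ p)
    (φ : ℕ → ℝ)
    (σ2 : ℝ) (hσ : 0 < σ2)
    (γ : ℤ → ℝ)
    (hsym : ∀ j : ℤ, γ (-j) = γ j)
    (hYW0 : γ 0 = (∑ i ∈ Finset.Icc 1 p, φ i * γ (i : ℤ)) + σ2)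
    (hYW : ∀ j : ℤ, 1 ≤ j → γ j = ∑ i ∈ Finset.Icc 1 p, φ i * γ (j - (i : ℤ)))
    (Γ : (m : ℕ) → Matrix (Fin m) (Fin m) ℝ)
    (hΓ : ∀ m : ℕ, ∀ i j : Fin m, Γ m i j = γ |(i : ℤ) - (j : ℤ)|)
    (hpd : ∀ m : ℕ, 1 ≤ m → (Γ m).PosDef)
    (m : ℕ) (hm : p ≤ m) :
    (Γ m).det = σ2 ^ (m - p) * (Γ p).det := by
  have habs : ∀ x : ℤ, γ |x| = γ x := by
    intro x
    rcases abs_choice x with h | h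
    · rw [h]
    · rw [h, hsym]
  -- key step: one-step reduction
  have step : ∀ n : ℕ, p ≤ n → (Γ (n + 1)).det = σ2 * (Γ n).det := by
    intro n hn
    set A := Γ (n + 1) with hA
    -- row indices used in the row operation
    have hrow : ∀ i ∈ Finset.Icc 1 p, n - i < n + 1 := by
      intro i hi; omega
    set f : ℕ → Fin (n + 1) := fun i => ⟨n - i, by omega⟩ with hf
    have hfne : ∀ i ∈ Finset.Icc 1 p, f i ≠ Fin.last n := by
      intro i hi
      simp only [Finset.mem_Icc] at hi
      have : n - i < n := by omega
      simp only [hf, Ne, Fin.ext_iff, Fin.val_last]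
      omega
    set B := A.updateRow (Fin.last n)
      (A (Fin.last n) + ∑ i ∈ Finset.Icc 1 p, (-(φ i)) • A (f i)) with hB
    have hdetB : B.det = A.det :=
      det_updateRow_add_sum_aux A (Fin.last n) _ f hfne _
    have hAapp : ∀ i j : Fin (n+1), A i j = γ |(i : ℤ) - (j : ℤ)| := hΓ (n+1)
    -- the new last row is σ2 at the last column, 0 elsewhere
    have hcast : ∀ i ∈ Finset.Icc 1 p, ((f i : Fin (n+1)) : ℤ) = (n : ℤ) - (i : ℤ) := by
      intro i hi
      simp only [Finset.mem_Icc] at hi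
      simp only [hf]
      push_cast [Nat.cast_sub (by omega : i ≤ n)]
      rfl
    have hlastrow : ∀ j : Fin (n + 1),
        B (Fin.last n) j = if j = Fin.last n then σ2 else 0 := by
      intro j
      have hBj : B (Fin.last n) j
          = γ ((n : ℤ) - (j : ℤ)) - ∑ i ∈ Finset.Icc 1 p, φ i * γ ((n : ℤ) - (j : ℤ) - (i : ℤ)) := by
        simp only [hB, Matrix.updateRow_self, Pi.add_apply, Finset.sum_apply,
          Pi.smul_apply, smul_eq_mul]
        have h1 : ((Fin.last n : Fin (n+1)) : ℤ) = (n : ℤ) := by simp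
        rw [hAapp, h1, habs]
        rw [Finset.sum_congr rfl (fun i hi =>
          show -φ i * A (f i) j = -(φ i * γ ((n : ℤ) - (j : ℤ) - (i : ℤ))) by
            rw [hAapp, hcast i hi, habs,
              show (n : ℤ) - (i : ℤ) - ((j : Fin (n+1)) : ℤ)
                = (n : ℤ) - ((j : Fin (n+1)) : ℤ) - (i : ℤ) by ring]
            ring)]
        rw [Finset.sum_neg_distrib, ← sub_eq_add_neg]
      by_cases hj : j = Fin.last n
      · subst hj
        rw [if_pos rfl, hBj]
        have h1 : ((Fin.last n : Fin (n+1)) : ℤ) = (n : ℤ) := by simp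
        rw [h1, sub_self, hYW0]
        have : ∀ i ∈ Finset.Icc 1 p, φ i * γ ((0 : ℤ) - (i : ℤ)) = φ i * γ (i : ℤ) := by
          intro i hi
          rw [zero_sub, hsym]
        rw [Finset.sum_congr rfl this]
        ring
      · simp only [if_neg hj]
        rw [hBj]
        have hjn : (j : ℕ) < n := by
          have := j.isLt
          have : (j : ℕ) ≠ n := fun h => hj (Fin.ext (by simp [h]))
          omega
        have hd : (1 : ℤ) ≤ (n : ℤ) - (j : ℤ) := by
          have : ((j : ℕ) : ℤ) < (n : ℤ) := by exact_mod_cast hjn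
          omega
        rw [hYW _ hd]
        simp
    -- Laplace expansion of det B along the last row
    have hsub : B.submatrix (Fin.last n).succAbove (Fin.last n).succAbove = Γ n := by
      ext i j
      rw [Fin.succAbove_last]
      simp only [Matrix.submatrix_apply]
      have hne : (Fin.castSucc i : Fin (n+1)) ≠ Fin.last n := (Fin.castSucc_lt_last i).ne
      rw [hB, Matrix.updateRow_ne hne, hAapp, hΓ]
      simp
    have hdet2 : B.det = σ2 * (Γ n).det := by
      rw [Matrix.det_succ_row B (Fin.last n)]
      rw [Finset.sum_eq_single (Fin.last n)]
      · rw [hlastrow, if_pos rfl, hsub]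
        simp only [Fin.val_last]
        rw [show ((-1 : ℝ)) ^ (n + n) = 1 by
          rw [← two_mul, pow_mul]; norm_num]
        ring
      · intro b _ hbne
        rw [hlastrow, if_neg hbne]
        ring
      · intro h
        exact absurd (Finset.mem_univ _) h
    -- conclude
    rw [show (Γ (n+1)).det = A.det from rfl, ← hdetB, hdet2]
  -- induction on m from p
  induction m, hm using Nat.le_induction with
  | base => simp
  | succ n hn ih =>
      rw [step n hn, ih]
      rw [show n + 1 - p = (n - p) + 1 by omega, pow_succ]
      ring
end

section
/- Initial condition for the nested lower right corner matrix: NLRC_{p,p+1}(1,1) = 1; equivalently, the (p+1, p+1) entry of Γ_{p+1}^{-1} equals 1/σ². -/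
open Matrix Finset

/-- Context: AR(p) coefficients `φ`, white-noise variance `σ2`, autocovariance
sequence `γ` satisfying the Yule–Walker equations, and the autocovariance
Toeplitz matrices `Γ m`, assumed positive definite for `m ≥ 1`. -/
theorem stmt_5
    (p : ℕ) (hp : 1 ≤ p)
    (φ : ℕ → ℝ)
    (σ2 : ℝ) (hσ : 0 < σ2)
    (γ : ℤ → ℝ)
    (hsym : ∀ j : ℤ, γ (-j) = γ j)
    (hYW0 : γ 0 = (∑ i ∈ Finset.Icc 1 p, φ i * γ (i : ℤ)) + σ2)
    (hYW : ∀ j : ℤ, 1 ≤ j → γ j = ∑ i ∈ Finset.Icc 1 p, φ i * γ (j - (i : ℤ)))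
    (Γ : (m : ℕ) → Matrix (Fin m) (Fin m) ℝ)
    (hΓ : ∀ m : ℕ, ∀ i j : Fin m, Γ m i j = γ |(i : ℤ) - (j : ℤ)|)
    (hpd : ∀ m : ℕ, 1 ≤ m → (Γ m).PosDef)
    :
    σ2 * (Γ (p + 1))⁻¹ ⟨p, by omega⟩ ⟨p, by omega⟩ = 1 ∧
    (Γ (p + 1))⁻¹ ⟨p, by omega⟩ ⟨p, by omega⟩ = 1 / σ2 := by
  have hγabs : ∀ x : ℤ, γ |x| = γ x := by
    intro x
    rcases abs_cases x with ⟨h, _⟩ | ⟨h, _⟩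
    · rw [h]
    · rw [h, hsym]
  set P : Fin (p + 1) := ⟨p, by omega⟩ with hP
  set v : Fin (p + 1) → ℝ := fun k => if (k : ℕ) = p then 1 else -φ (p - (k : ℕ)) with hv
  -- reindexing identity
  have hsum : ∀ j : Fin (p + 1),
      ∑ k : Fin p, γ |(j : ℤ) - (k : ℤ)| * φ (p - (k : ℕ))
        = ∑ i ∈ Finset.Icc 1 p, φ i * γ ((j : ℤ) - ((p : ℤ) - (i : ℤ))) := by
    intro j
    refine Finset.sum_bij' (fun (k : Fin p) (_ : k ∈ Finset.univ) => p - (k : ℕ))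
      (fun (i : ℕ) (hi : i ∈ Finset.Icc 1 p) => (⟨p - i, by
        have := Finset.mem_Icc.mp hi; omega⟩ : Fin p)) ?_ ?_ ?_ ?_ ?_
    · intro k hk
      have := k.isLt
      simp only [Finset.mem_Icc]
      omega
    · intro a ha
      exact Finset.mem_univ _
    · intro a ha
      have := a.isLt
      simp only [Fin.ext_iff, Fin.val_mk]
      omega
    · intro a ha
      have := Finset.mem_Icc.mp ha
      simp only [Fin.val_mk]
      omega
    · intro a ha
      have hk : (a : ℕ) < p := a.isLt
      show γ |((j : ℕ) : ℤ) - ((a : ℕ) : ℤ)| * φ (p - (a : ℕ))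
        = φ (p - (a : ℕ)) * γ (((j : ℕ) : ℤ) - ((p : ℤ) - ((p - (a : ℕ) : ℕ) : ℤ)))
      have h1 : ((p - (a : ℕ) : ℕ) : ℤ) = (p : ℤ) - ((a : ℕ) : ℤ) :=
        Nat.cast_sub (le_of_lt hk)
      rw [h1]
      have h2 : ((j : ℕ) : ℤ) - ((p : ℤ) - ((p : ℤ) - ((a : ℕ) : ℤ)))
          = ((j : ℕ) : ℤ) - ((a : ℕ) : ℤ) := by ring
      rw [h2, hγabs]
      ring
  have hrow : ∀ j : Fin (p + 1), (Γ (p + 1) *ᵥ v) j = if (j : ℕ) = p then σ2 else 0 := by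
    intro j
    have hexp : (Γ (p + 1) *ᵥ v) j
        = γ |(j : ℤ) - (p : ℤ)| - ∑ k : Fin p, γ |(j : ℤ) - (k : ℤ)| * φ (p - (k : ℕ)) := by
      simp only [mulVec, dotProduct]
      rw [Fin.sum_univ_castSucc]
      have hlast : Γ (p + 1) j (Fin.last p) * v (Fin.last p) = γ |(j : ℤ) - (p : ℤ)| := by
        simp [hv, hΓ, Fin.val_last]
      have hterm : ∀ k : Fin p,
          Γ (p + 1) j k.castSucc * v k.castSucc
            = -(γ |(j : ℤ) - (k : ℤ)| * φ (p - (k : ℕ))) := by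
        intro k
        have hk : (k : ℕ) < p := k.isLt
        simp [hv, hΓ, Fin.coe_castSucc, hk.ne, mul_comm]
      rw [hlast, Finset.sum_congr rfl fun k _ => hterm k, Finset.sum_neg_distrib]
      ring
    rw [hexp, hsum]
    by_cases hj : (j : ℕ) = p
    · rw [if_pos hj]
      have hj' : (j : ℤ) = (p : ℤ) := by exact_mod_cast hj
      rw [hj']
      have : ∀ i ∈ Finset.Icc 1 p,
          φ i * γ ((p : ℤ) - ((p : ℤ) - (i : ℤ))) = φ i * γ (i : ℤ) := by
        intro i _
        congr 1
        ring_nf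
      rw [Finset.sum_congr rfl this]
      simp only [sub_self, abs_zero]
      rw [hYW0]; ring
    · rw [if_neg hj]
      have hjlt : (j : ℕ) < p := by have := j.isLt; omega
      have habs : |(j : ℤ) - (p : ℤ)| = (p : ℤ) - (j : ℤ) := by
        rw [abs_sub_comm, abs_of_nonneg]
        omega
      rw [habs]
      have h1 : (1 : ℤ) ≤ (p : ℤ) - (j : ℤ) := by omega
      rw [hYW _ h1]
      have : ∀ i ∈ Finset.Icc 1 p,
          φ i * γ ((p : ℤ) - (j : ℤ) - (i : ℤ))
            = φ i * γ ((j : ℤ) - ((p : ℤ) - (i : ℤ))) := by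
        intro i _
        congr 1
        rw [← hsym ((j : ℤ) - ((p : ℤ) - (i : ℤ)))]
        congr 1
        ring
      rw [Finset.sum_congr rfl this]
      ring
  have hdet : IsUnit (Γ (p + 1)).det :=
    isUnit_iff_ne_zero.mpr (ne_of_gt (hpd (p + 1) (by omega)).det_pos)
  have hinv : (Γ (p + 1))⁻¹ * Γ (p + 1) = 1 := Matrix.nonsing_inv_mul _ hdet
  have hv_eq : v = (Γ (p + 1))⁻¹ *ᵥ (Γ (p + 1) *ᵥ v) := by
    rw [Matrix.mulVec_mulVec, hinv, Matrix.one_mulVec]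
  have key : (1 : ℝ) = σ2 * (Γ (p + 1))⁻¹ P P := by
    have h1 : v P = 1 := by simp [hv, hP]
    have h2 : ((Γ (p + 1))⁻¹ *ᵥ (Γ (p + 1) *ᵥ v)) P = σ2 * (Γ (p + 1))⁻¹ P P := by
      simp only [mulVec, dotProduct]
      calc ∑ k, (Γ (p + 1))⁻¹ P k * ∑ l, Γ (p + 1) k l * v l
          = ∑ k : Fin (p + 1), (Γ (p + 1))⁻¹ P k * (if (k : ℕ) = p then σ2 else 0) := by
            refine Finset.sum_congr rfl fun k _ => ?_
            have := hrow k
            simp only [mulVec, dotProduct] at this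
            rw [this]
        _ = σ2 * (Γ (p + 1))⁻¹ P P := by
            rw [Finset.sum_eq_single P]
            · simp [hP, mul_comm]
            · intro k _ hk
              have : (k : ℕ) ≠ p := fun h => hk (Fin.ext h)
              simp [this]
            · intro h; exact absurd (Finset.mem_univ P) h
    rw [← h1, hv_eq, h2]
  constructor
  · exact key.symm
  · rw [eq_div_iff (ne_of_gt hσ), mul_comm]
    exact key.symm
end

section
/- Nesting of the lower right corner: for every integer m ≥ p+2 and all indices 2 ≤ j ≤ i ≤ m−p, NLRC_{p,m}(i,j) = NLRC_{p,m−1}(i−1, j−1); that is, deleting the first row and first column of NLRC_{p,m} yields NLRC_{p,m−1}. -/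
open Matrix Finset

/-- Context: AR(p) coefficients `φ`, white-noise variance `σ2`, autocovariance
sequence `γ` satisfying the Yule–Walker equations, and the autocovariance
Toeplitz matrices `Γ m`, assumed positive definite for `m ≥ 1`. -/
theorem stmt_6
    (p : ℕ) (hp : 1 ≤ p)
    (φ : ℕ → ℝ)
    (σ2 : ℝ) (hσ : 0 < σ2)
    (γ : ℤ → ℝ)
    (hsym : ∀ j : ℤ, γ (-j) = γ j)
    (hYW0 : γ 0 = (∑ i ∈ Finset.Icc 1 p, φ i * γ (i : ℤ)) + σ2)
    (hYW : ∀ j : ℤ, 1 ≤ j → γ j = ∑ i ∈ Finset.Icc 1 p, φ i * γ (j - (i : ℤ)))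
    (Γ : (m : ℕ) → Matrix (Fin m) (Fin m) ℝ)
    (hΓ : ∀ m : ℕ, ∀ i j : Fin m, Γ m i j = γ |(i : ℤ) - (j : ℤ)|)
    (hpd : ∀ m : ℕ, 1 ≤ m → (Γ m).PosDef)
    (m : ℕ) (hm : p + 2 ≤ m) (i j : ℕ) (hj : 2 ≤ j) (hji : j ≤ i) (hi : i ≤ m - p) :
    σ2 * (Γ m)⁻¹ ⟨p + i - 1, by omega⟩ ⟨p + j - 1, by omega⟩
      = σ2 * (Γ (m - 1))⁻¹ ⟨p + i - 2, by omega⟩ ⟨p + j - 2, by omega⟩ := by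
  -- γ doesn't care about absolute values
  have hγabs : ∀ x : ℤ, γ |x| = γ x := by
    intro x
    rcases abs_choice x with h | h
    · rw [h]
    · rw [h, hsym]
  have hΓ' : ∀ mm : ℕ, ∀ a b : Fin mm, Γ mm a b = γ ((a : ℤ) - (b : ℤ)) := by
    intro mm a b; rw [hΓ, hγabs]
  obtain ⟨n, rfl⟩ : ∃ n, m = n + 1 := ⟨m - 1, by omega⟩
  have hpn : p ≤ n := by omega
  -- invertibility
  have hdetA : IsUnit (Γ (n + 1)).det :=
    isUnit_iff_ne_zero.mpr (ne_of_gt (hpd (n + 1) (by omega)).det_pos)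
  have hdetB : IsUnit (Γ n).det :=
    isUnit_iff_ne_zero.mpr (ne_of_gt (hpd n (by omega)).det_pos)
  -- indices
  have hin : p + i - 1 < n + 1 := by omega
  have hjn : p + j - 1 < n + 1 := by omega
  have hin' : p + i - 2 < n := by omega
  have hjn' : p + j - 2 < n := by omega
  set bb : Fin (n + 1) := ⟨p + j - 1, hjn⟩ with hbb
  set b' : Fin n := ⟨p + j - 2, hjn'⟩ with hb'
  set a' : Fin n := ⟨p + i - 2, hin'⟩ with ha'
  have hsuccb : b'.succ = bb := by
    apply Fin.ext; simp [hbb, hb', Fin.val_succ]; omega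
  -- the shifted inverse-column vector, corrected by the YW coefficients
  set x0 : ℝ := (Γ (n + 1))⁻¹ 0 bb with hx0
  set z : Fin n → ℝ :=
    fun k => (Γ (n + 1))⁻¹ k.succ bb + x0 * (if (k : ℕ) < p then φ ((k : ℕ) + 1) else 0)
    with hzdef
  -- key Yule-Walker computation
  have key : ∀ c : Fin n,
      (∑ k : Fin n, Γ n c k * (if (k : ℕ) < p then φ ((k : ℕ) + 1) else 0))
        = γ ((c : ℤ) + 1) := by
    intro c
    have h1 : γ ((c : ℤ) + 1) = ∑ ii ∈ Finset.Icc 1 p, φ ii * γ (((c : ℤ) + 1) - (ii : ℤ)) :=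
      hYW _ (by omega)
    have h2 : (∑ k : Fin n, Γ n c k * (if (k : ℕ) < p then φ ((k : ℕ) + 1) else 0))
        = ∑ k ∈ Finset.range n,
            (γ ((c : ℤ) - (k : ℤ)) * (if k < p then φ (k + 1) else 0)) := by
      rw [← Fin.sum_univ_eq_sum_range
        (fun k : ℕ => γ ((c : ℤ) - (k : ℤ)) * (if k < p then φ (k + 1) else 0)) n]
      apply Finset.sum_congr rfl
      intro k _
      rw [hΓ']
    rw [h1, h2]
    rw [← Finset.Ico_add_one_right_eq_Icc, Finset.sum_Ico_eq_sum_range]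
    rw [← Finset.sum_subset (Finset.range_subset_range.mpr hpn)
      (by
        intro k _ hk
        rw [Finset.mem_range] at hk
        rw [if_neg hk, mul_zero])]
    apply Finset.sum_congr rfl
    intro k hk
    rw [Finset.mem_range] at hk
    rw [if_pos hk]
    have : (c : ℤ) + 1 - ((1 + k : ℕ) : ℤ) = (c : ℤ) - (k : ℤ) := by push_cast; ring
    rw [this]
    have : (1 + k) = k + 1 := by omega
    rw [this, mul_comm]
  -- z solves Γ n *ᵥ z = e_{b'}
  have hAinv : Γ (n + 1) * (Γ (n + 1))⁻¹ = 1 := Matrix.mul_nonsing_inv _ hdetA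
  have hz : ∀ c : Fin n, (∑ k : Fin n, Γ n c k * z k)
      = (if c = b' then (1 : ℝ) else 0) := by
    intro c
    have hrow : (∑ k : Fin (n + 1), Γ (n + 1) c.succ k * (Γ (n + 1))⁻¹ k bb)
        = (1 : Matrix (Fin (n + 1)) (Fin (n + 1)) ℝ) c.succ bb := by
      have := congrFun (congrFun hAinv c.succ) bb
      simpa [Matrix.mul_apply] using this
    rw [Fin.sum_univ_succ] at hrow
    have hA0 : Γ (n + 1) c.succ 0 = γ ((c : ℤ) + 1) := by
      rw [hΓ']; simp [Fin.val_succ]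
    have hAs : ∀ k : Fin n, Γ (n + 1) c.succ k.succ = Γ n c k := by
      intro k
      rw [hΓ', hΓ']
      congr 1
      simp [Fin.val_succ]
    have expand : (∑ k : Fin n, Γ n c k * z k)
        = (∑ k : Fin n, Γ n c k * (Γ (n + 1))⁻¹ k.succ bb)
          + x0 * (∑ k : Fin n, Γ n c k * (if (k : ℕ) < p then φ ((k : ℕ) + 1) else 0)) := by
      rw [Finset.mul_sum, ← Finset.sum_add_distrib]
      apply Finset.sum_congr rfl
      intro k _
      simp only [hzdef]
      ring
    rw [expand, key]
    have hsum : (∑ k : Fin n, Γ n c k * (Γ (n + 1))⁻¹ k.succ bb)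
        = (1 : Matrix (Fin (n + 1)) (Fin (n + 1)) ℝ) c.succ bb - γ ((c : ℤ) + 1) * x0 := by
      rw [← hrow, hA0]
      have : ∀ k : Fin n, Γ n c k * (Γ (n + 1))⁻¹ k.succ bb
          = Γ (n + 1) c.succ k.succ * (Γ (n + 1))⁻¹ k.succ bb := by
        intro k; rw [hAs]
      rw [Finset.sum_congr rfl (fun k _ => this k)]
      ring
    rw [hsum]
    have hone : (1 : Matrix (Fin (n + 1)) (Fin (n + 1)) ℝ) c.succ bb
        = (if c = b' then (1 : ℝ) else 0) := by
      rw [← hsuccb, Matrix.one_apply]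
      by_cases h : c = b'
      · rw [if_pos h, if_pos (by rw [h])]
      · rw [if_neg h, if_neg (fun hh => h (Fin.succ_injective _ hh))]
    rw [hone]; ring
  -- hence z is the b' column of (Γ n)⁻¹
  have hmv : Γ n *ᵥ z = fun c => (if c = b' then (1 : ℝ) else 0) := by
    funext c
    rw [← hz c]
    simp [Matrix.mulVec, dotProduct]
  have hzinv : z = (Γ n)⁻¹ *ᵥ (fun c => (if c = b' then (1 : ℝ) else 0)) := by
    rw [← hmv, Matrix.mulVec_mulVec, Matrix.nonsing_inv_mul _ hdetB, Matrix.one_mulVec]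
  have hza : z a' = (Γ n)⁻¹ a' b' := by
    rw [hzinv]
    simp only [Matrix.mulVec, dotProduct]
    rw [show (∑ k : Fin n, (Γ n)⁻¹ a' k * (if k = b' then (1 : ℝ) else 0))
        = ∑ k : Fin n, (if k = b' then (Γ n)⁻¹ a' k else 0) from
      Finset.sum_congr rfl (fun k _ => by by_cases h : k = b' <;> simp [h])]
    rw [Finset.sum_ite_eq' Finset.univ b' (fun k => (Γ n)⁻¹ a' k)]
    simp
  -- unfold z at a' : the correction term vanishes since p + i - 2 ≥ p
  have hzaval : z a' = (Γ (n + 1))⁻¹ ⟨p + i - 1, hin⟩ bb := by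
    simp only [hzdef]
    have h1 : ¬ ((a' : ℕ) < p) := by simp [ha']; omega
    rw [if_neg h1, mul_zero, add_zero]
    have : a'.succ = (⟨p + i - 1, hin⟩ : Fin (n + 1)) := by
      apply Fin.ext
      simp [ha', Fin.val_succ]
      omega
    rw [this]
  have final : (Γ (n + 1))⁻¹ ⟨p + i - 1, hin⟩ bb = (Γ n)⁻¹ a' b' := by
    rw [← hzaval, hza]
  show σ2 * (Γ (n + 1))⁻¹ ⟨p + i - 1, hin⟩ bb = σ2 * (Γ n)⁻¹ a' b'
  rw [final]
end

section
/- Last entry of the first column of NLRC in the overlapping regime: for every integer m with p+2 ≤ m ≤ 2p+1, NLRC_{p,m}(m−p, 1) = φ₀ · φ_{m−p−1} = −φ_{m−p−1}, where φ₀ := −1. -/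
open Matrix Finset

private lemma gabs (γ : ℤ → ℝ) (hsym : ∀ j : ℤ, γ (-j) = γ j) (x : ℤ) : γ |x| = γ x := by
  rcases abs_cases x with ⟨h, _⟩ | ⟨h, _⟩
  · rw [h]
  · rw [h, hsym]

private lemma sum_shift (f : ℕ → ℝ) (n : ℕ) :
    ∑ j ∈ Finset.range n, f (j + 1) = ∑ j ∈ Finset.Ioc 0 n, f j := by
  induction n with
  | zero => simp
  | succ n ih => rw [Finset.sum_range_succ, ih, Finset.sum_Ioc_succ_top (Nat.zero_le n)]

private lemma Icc1 (p : ℕ) : Finset.Icc 1 p = Finset.Ioc 0 p := by rw [← Finset.Icc_add_one_left_eq_Ioc]; rfl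

noncomputable def Gf (p : ℕ) (φ : ℕ → ℝ) (γ : ℤ → ℝ) (d : ℤ) : ℝ :=
  ∑ k ∈ Finset.range (p + 1), φ k * γ |d + (k : ℤ)|

private lemma Gf_peel (p : ℕ) (φ : ℕ → ℝ) (γ : ℤ → ℝ) (d : ℤ) :
    Gf p φ γ d = φ 0 * γ |d| + ∑ k ∈ Finset.Ioc 0 p, φ k * γ |d + (k : ℤ)| := by
  rw [Gf, Finset.sum_range_succ', sum_shift (fun k => φ k * γ |d + ((k : ℕ) : ℤ)|) p]
  push_cast
  rw [add_zero]
  ring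

private lemma YWabs (p : ℕ) (φ : ℕ → ℝ) (γ : ℤ → ℝ)
    (hsym : ∀ j : ℤ, γ (-j) = γ j)
    (hYW : ∀ j : ℤ, 1 ≤ j → γ j = ∑ i ∈ Finset.Icc 1 p, φ i * γ (j - (i : ℤ)))
    (j : ℤ) (hj : 1 ≤ j) :
    γ j = ∑ i ∈ Finset.Ioc 0 p, φ i * γ |j - (i : ℤ)| := by
  rw [← Icc1, hYW j hj]
  exact Finset.sum_congr rfl fun i _ => by rw [gabs γ hsym]

private lemma Gneg (p : ℕ) (φ : ℕ → ℝ) (γ : ℤ → ℝ) (hφ0 : φ 0 = -1)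
    (hsym : ∀ j : ℤ, γ (-j) = γ j)
    (hYW : ∀ j : ℤ, 1 ≤ j → γ j = ∑ i ∈ Finset.Icc 1 p, φ i * γ (j - (i : ℤ)))
    (d : ℤ) (hd : d < 0) : Gf p φ γ d = 0 := by
  rw [Gf_peel, hφ0]
  have h1 : γ |d| = γ (-d) := by rw [abs_of_neg hd]
  have h2 : ∀ k : ℕ, γ |d + (k : ℤ)| = γ |(-d) - (k : ℤ)| := by
    intro k
    rw [show |d + (k : ℤ)| = |(-d) - (k : ℤ)| by rw [← abs_neg]; ring_nf]
  rw [h1, Finset.sum_congr rfl fun k _ => by rw [h2 k],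
    ← YWabs p φ γ hsym hYW (-d) (by omega)]
  ring

private lemma G0 (p : ℕ) (φ : ℕ → ℝ) (γ : ℤ → ℝ) (σ2 : ℝ) (hφ0 : φ 0 = -1)
    (hYW0 : γ 0 = (∑ i ∈ Finset.Icc 1 p, φ i * γ (i : ℤ)) + σ2) :
    Gf p φ γ 0 = -σ2 := by
  rw [Gf_peel, hφ0]
  have : ∀ k : ℕ, γ |(0 : ℤ) + (k : ℤ)| = γ (k : ℤ) := by
    intro k
    rw [zero_add, abs_of_nonneg (Int.natCast_nonneg k)]
  rw [Finset.sum_congr rfl fun k _ => by rw [this k]]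
  rw [Icc1] at hYW0
  rw [abs_zero, hYW0]
  ring

private lemma key_zero (p : ℕ) (φ : ℕ → ℝ) (γ : ℤ → ℝ) (hφ0 : φ 0 = -1)
    (hsym : ∀ j : ℤ, γ (-j) = γ j)
    (hYW : ∀ j : ℤ, 1 ≤ j → γ j = ∑ i ∈ Finset.Icc 1 p, φ i * γ (j - (i : ℤ)))
    (d : ℕ) (hd1 : 1 ≤ d) (hdp : d ≤ p) :
    ∑ j ∈ Finset.range (d + 1), φ j * Gf p φ γ ((d : ℤ) - (j : ℤ)) = 0 := by
  have Hform : ∀ e : ℤ, 1 ≤ e →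
      ∑ j ∈ Finset.range (d + 1), φ j * γ |e - (j : ℤ)|
        = -∑ j ∈ Finset.Ioc d p, φ j * γ |e - (j : ℤ)| := by
    intro e he
    rw [Finset.sum_range_succ', sum_shift (fun j => φ j * γ |e - ((j : ℕ) : ℤ)|) d]
    have hsplit := Finset.sum_Ioc_consecutive (fun j => φ j * γ |e - ((j : ℕ) : ℤ)|)
      (Nat.zero_le d) hdp
    have hyw := YWabs p φ γ hsym hYW e he
    rw [hφ0, Nat.cast_zero, sub_zero, gabs γ hsym e, hyw, ← hsplit]
    ring
  calc ∑ j ∈ Finset.range (d + 1), φ j * Gf p φ γ ((d : ℤ) - (j : ℤ))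
      = ∑ k ∈ Finset.range (p + 1), φ k *
          ∑ j ∈ Finset.range (d + 1), φ j * γ |((d : ℤ) + (k : ℤ)) - (j : ℤ)| := by
        simp only [Gf, Finset.mul_sum]
        rw [Finset.sum_comm]
        refine Finset.sum_congr rfl fun k _ => Finset.sum_congr rfl fun j _ => ?_
        rw [show ((d : ℤ) - (j : ℤ) + (k : ℤ)) = ((d : ℤ) + (k : ℤ)) - (j : ℤ) by ring]
        ring
    _ = ∑ k ∈ Finset.range (p + 1), φ k *
          (-∑ j ∈ Finset.Ioc d p, φ j * γ |((d : ℤ) + (k : ℤ)) - (j : ℤ)|) := by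
        refine Finset.sum_congr rfl fun k _ => ?_
        rw [Hform ((d : ℤ) + (k : ℤ)) (by omega)]
    _ = -∑ j ∈ Finset.Ioc d p, φ j * Gf p φ γ ((d : ℤ) - (j : ℤ)) := by
        simp only [mul_neg, ← Finset.sum_neg_distrib, Gf, Finset.mul_sum]
        rw [Finset.sum_comm]
        refine Finset.sum_congr rfl fun j _ => Finset.sum_congr rfl fun k _ => ?_
        rw [show ((d : ℤ) - (j : ℤ) + (k : ℤ)) = ((d : ℤ) + (k : ℤ)) - (j : ℤ) by ring]
        ring
    _ = 0 := by
        rw [neg_eq_zero]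
        refine Finset.sum_eq_zero fun j hj => ?_
        rw [Finset.mem_Ioc] at hj
        rw [Gneg p φ γ hφ0 hsym hYW _ (by omega), mul_zero]

noncomputable def uv (p m : ℕ) (φ : ℕ → ℝ) (s : ℕ) : ℝ :=
  ∑ j ∈ Finset.range (m - p), ∑ k ∈ Finset.range (p + 1),
    if s + k = p + j then φ j * φ k else 0

private lemma rowlem (p : ℕ) (φ : ℕ → ℝ) (σ2 : ℝ) (γ : ℤ → ℝ) (hφ0 : φ 0 = -1)
    (hsym : ∀ j : ℤ, γ (-j) = γ j)
    (hYW0 : γ 0 = (∑ i ∈ Finset.Icc 1 p, φ i * γ (i : ℤ)) + σ2)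
    (hYW : ∀ j : ℤ, 1 ≤ j → γ j = ∑ i ∈ Finset.Icc 1 p, φ i * γ (j - (i : ℤ)))
    (m : ℕ) (hm1 : p + 2 ≤ m) (hm2 : m ≤ 2 * p + 1) (i : ℕ) (hi : i < m) :
    ∑ s ∈ Finset.range m, γ |(i : ℤ) - (s : ℤ)| * uv p m φ s
      = σ2 * (if i = p then 1 else 0) := by
  have step1 : ∑ s ∈ Finset.range m, γ |(i : ℤ) - (s : ℤ)| * uv p m φ s
      = ∑ j ∈ Finset.range (m - p), φ j * Gf p φ γ ((i : ℤ) - (p : ℤ) - (j : ℤ)) := by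
    simp only [uv, Finset.mul_sum]
    rw [Finset.sum_comm]
    refine Finset.sum_congr rfl fun j hj => ?_
    rw [Finset.sum_comm]
    rw [Finset.mem_range] at hj
    simp only [Gf, Finset.mul_sum]
    refine Finset.sum_congr rfl fun k hk => ?_
    rw [Finset.mem_range] at hk
    rw [Finset.sum_eq_single (p + j - k)]
    · rw [if_pos (by omega)]
      have : ((p + j - k : ℕ) : ℤ) = (p : ℤ) + j - k := by omega
      rw [this, show ((i : ℤ) - ((p : ℤ) + (j : ℤ) - (k : ℤ))) = ((i : ℤ) - p - j + k) by ring]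
      ring
    · intro b _ hb
      rw [if_neg (by omega), mul_zero]
    · intro h
      exact absurd (Finset.mem_range.mpr (by omega)) h
  rw [step1]
  rcases lt_trichotomy i p with hip | hip | hip
  · rw [if_neg (by omega), mul_zero]
    refine Finset.sum_eq_zero fun j _ => ?_
    rw [Gneg p φ γ hφ0 hsym hYW _ (by omega), mul_zero]
  · rw [if_pos hip, mul_one]
    rw [Finset.sum_eq_single 0]
    · rw [show ((i : ℤ) - (p : ℤ) - ((0 : ℕ) : ℤ)) = 0 by omega,
        G0 p φ γ σ2 hφ0 hYW0, hφ0]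
      ring
    · intro b _ hb
      rw [Gneg p φ γ hφ0 hsym hYW _ (by omega), mul_zero]
    · intro h
      exact absurd (Finset.mem_range.mpr (by omega)) h
  · rw [if_neg (by omega), mul_zero]
    have hd1 : 1 ≤ i - p := by omega
    have hdp : i - p ≤ p := by omega
    have hcast : ∀ j : ℕ, (i : ℤ) - (p : ℤ) - (j : ℤ) = ((i - p : ℕ) : ℤ) - (j : ℤ) := by
      intro j; omega
    rw [Finset.sum_congr rfl fun j _ => by rw [hcast j]]
    rw [← Finset.sum_subset (Finset.range_subset_range.mpr (show i - p + 1 ≤ m - p by omega))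
      (fun x _ hx => by
        rw [Finset.mem_range, not_lt] at hx
        rw [Gneg p φ γ hφ0 hsym hYW _ (by omega), mul_zero])]
    exact key_zero p φ γ hφ0 hsym hYW (i - p) hd1 hdp

private lemma uv_eval (p m : ℕ) (φ : ℕ → ℝ) (hm1 : p + 2 ≤ m) :
    uv p m φ (m - 1) = φ 0 * φ (m - p - 1) := by
  rw [uv, Finset.sum_eq_single (m - p - 1)]
  · rw [Finset.sum_eq_single 0]
    · rw [if_pos (by omega)]
      ring
    · intro k _ hk
      rw [if_neg (by omega)]
    · intro h
      exact absurd (Finset.mem_range.mpr (by omega)) h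
  · intro j hj hjne
    rw [Finset.mem_range] at hj
    exact Finset.sum_eq_zero fun k _ => by rw [if_neg (by omega)]
  · intro h
    exact absurd (Finset.mem_range.mpr (by omega)) h

/-- Context: AR(p) coefficients `φ`, white-noise variance `σ2`, autocovariance
sequence `γ` satisfying the Yule–Walker equations, and the autocovariance
Toeplitz matrices `Γ m`, assumed positive definite for `m ≥ 1`. -/
theorem stmt_8
    (p : ℕ) (hp : 1 ≤ p)
    (φ : ℕ → ℝ) (hφ0 : φ 0 = -1)
    (σ2 : ℝ) (hσ : 0 < σ2)
    (γ : ℤ → ℝ)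
    (hsym : ∀ j : ℤ, γ (-j) = γ j)
    (hYW0 : γ 0 = (∑ i ∈ Finset.Icc 1 p, φ i * γ (i : ℤ)) + σ2)
    (hYW : ∀ j : ℤ, 1 ≤ j → γ j = ∑ i ∈ Finset.Icc 1 p, φ i * γ (j - (i : ℤ)))
    (Γ : (m : ℕ) → Matrix (Fin m) (Fin m) ℝ)
    (hΓ : ∀ m : ℕ, ∀ i j : Fin m, Γ m i j = γ |(i : ℤ) - (j : ℤ)|)
    (hpd : ∀ m : ℕ, 1 ≤ m → (Γ m).PosDef)
    (m : ℕ) (hm1 : p + 2 ≤ m) (hm2 : m ≤ 2 * p + 1) :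
    σ2 * (Γ m)⁻¹ ⟨m - 1, by omega⟩ ⟨p, by omega⟩ = φ 0 * φ (m - p - 1) := by
  have hdet : IsUnit (Γ m).det :=
    isUnit_iff_ne_zero.mpr (ne_of_gt (hpd m (by omega)).det_pos)
  set u : Fin m → ℝ := fun s => uv p m φ (s : ℕ) with hu_def
  have hu : (Γ m) *ᵥ u = fun i : Fin m => σ2 * (if (i : ℕ) = p then 1 else 0) := by
    funext i
    simp only [Matrix.mulVec, dotProduct, hu_def]
    have h1 : ∀ s : Fin m, Γ m i s * uv p m φ (s : ℕ)
        = γ |(i : ℤ) - ((s : ℕ) : ℤ)| * uv p m φ (s : ℕ) := fun s => by rw [hΓ]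
    rw [Finset.sum_congr rfl fun s _ => h1 s,
      Fin.sum_univ_eq_sum_range (fun s => γ |(i : ℤ) - (s : ℤ)| * uv p m φ s) m]
    exact rowlem p φ σ2 γ hφ0 hsym hYW0 hYW m hm1 hm2 i i.isLt
  have h2 : (Γ m)⁻¹ *ᵥ ((Γ m) *ᵥ u) = u := by
    rw [Matrix.mulVec_mulVec, Matrix.nonsing_inv_mul _ hdet, Matrix.one_mulVec]
  have h3 := congrFun h2 ⟨m - 1, by omega⟩
  rw [hu] at h3
  set c : Fin m := ⟨p, by omega⟩ with hc
  have h4 : ((Γ m)⁻¹ *ᵥ fun i : Fin m => σ2 * (if (i : ℕ) = p then 1 else 0))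
      ⟨m - 1, by omega⟩ = (Γ m)⁻¹ ⟨m - 1, by omega⟩ c * σ2 := by
    simp only [Matrix.mulVec, dotProduct]
    rw [Finset.sum_eq_single c]
    · rw [if_pos rfl, mul_one]
    · intro s _ hs
      rw [if_neg (fun h => hs (Fin.ext h)), mul_zero, mul_zero]
    · intro h
      exact absurd (Finset.mem_univ c) h
  rw [h4] at h3
  have h5 : u ⟨m - 1, by omega⟩ = φ 0 * φ (m - p - 1) := uv_eval p m φ hm1
  rw [h5] at h3
  rw [hc] at h3 ⊢
  rw [mul_comm σ2 _, h3]
end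

section
/- First-column stabilization of NLRC in the non-overlapping regime: for every integer m ≥ 2p+2 and every index 1 ≤ i ≤ m−p−1, NLRC_{p,m}(i,1) = NLRC_{p,m−1}(i,1), and moreover NLRC_{p,m}(m−p, 1) = 0. -/
open Matrix Finset

noncomputable def Acoef (p : ℕ) (φ : ℕ → ℝ) (j : ℤ) : ℝ :=
  if j = 0 then 1 else if 1 ≤ j ∧ j ≤ (p : ℤ) then -φ j.toNat else 0

noncomputable def Vcol (p : ℕ) (φ : ℕ → ℝ) (z : ℤ) : ℝ :=
  ∑ i ∈ Finset.range (p + 1), Acoef p φ i * Acoef p φ ((i : ℤ) + p - z)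

lemma Acoef_neg (p : ℕ) (φ : ℕ → ℝ) {j : ℤ} (h : j < 0) : Acoef p φ j = 0 := by
  unfold Acoef
  rw [if_neg (by omega), if_neg (by omega)]

lemma Acoef_gt (p : ℕ) (φ : ℕ → ℝ) {j : ℤ} (h : (p : ℤ) < j) :
    Acoef p φ j = 0 := by
  unfold Acoef
  rw [if_neg (by omega), if_neg (by omega)]

lemma Acoef_zero (p : ℕ) (φ : ℕ → ℝ) : Acoef p φ 0 = 1 := by simp [Acoef]

lemma key (p : ℕ) (hp : 1 ≤ p)
    (φ : ℕ → ℝ)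
    (σ2 : ℝ)
    (γ : ℤ → ℝ)
    (hsym : ∀ j : ℤ, γ (-j) = γ j)
    (hYW0 : γ 0 = (∑ i ∈ Finset.Icc 1 p, φ i * γ (i : ℤ)) + σ2)
    (hYW : ∀ j : ℤ, 1 ≤ j → γ j = ∑ i ∈ Finset.Icc 1 p, φ i * γ (j - (i : ℤ)))
    (Γ : (m : ℕ) → Matrix (Fin m) (Fin m) ℝ)
    (hΓ : ∀ m : ℕ, ∀ i j : Fin m, Γ m i j = γ |(i : ℤ) - (j : ℤ)|)
    (hpd : ∀ m : ℕ, 1 ≤ m → (Γ m).PosDef)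
    (m : ℕ) (hm : 2 * p + 1 ≤ m) (hpm : p < m) (k : Fin m) :
    σ2 * (Γ m)⁻¹ k ⟨p, hpm⟩ = Vcol p φ (k : ℤ) := by
  have habs : ∀ x : ℤ, γ |x| = γ x := by
    intro x
    rcases abs_cases x with ⟨h1, _⟩ | ⟨h1, _⟩
    · rw [h1]
    · rw [h1, hsym]
  -- the "whitening" sum
  have hsum_eq : ∀ d : ℤ,
      (∑ j ∈ Finset.range (p + 1), Acoef p φ (j : ℤ) * γ (d - (j : ℤ)))
        = γ d - ∑ i ∈ Finset.Icc 1 p, φ i * γ (d - i) := by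
    intro d
    rw [Finset.sum_range_succ']
    have h0 : Acoef p φ ((0 : ℕ) : ℤ) * γ (d - ((0 : ℕ) : ℤ)) = γ d := by
      norm_num [Acoef_zero]
    rw [h0]
    have h1 : ∀ j ∈ Finset.range p,
        Acoef p φ ((j + 1 : ℕ) : ℤ) * γ (d - ((j + 1 : ℕ) : ℤ))
          = -(φ (j + 1) * γ (d - ((j + 1 : ℕ) : ℤ))) := by
      intro j hj
      rw [Finset.mem_range] at hj
      have hA : Acoef p φ ((j + 1 : ℕ) : ℤ) = -φ (j + 1) := by
        unfold Acoef
        rw [if_neg (by omega), if_pos (by constructor <;> omega)]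
        simp
      rw [hA]; ring
    rw [Finset.sum_congr rfl h1, Finset.sum_neg_distrib]
    have h2 : ∑ i ∈ Finset.Icc 1 p, φ i * γ (d - (i : ℤ))
        = ∑ j ∈ Finset.range p, φ (j + 1) * γ (d - ((j + 1 : ℕ) : ℤ)) := by
      refine Finset.sum_nbij' (fun i => i - 1) (fun j => j + 1) ?_ ?_ ?_ ?_ ?_
      · intro a ha; rw [Finset.mem_Icc] at ha; rw [Finset.mem_range]; omega
      · intro a ha; rw [Finset.mem_range] at ha; rw [Finset.mem_Icc]; omega
      · intro a ha; rw [Finset.mem_Icc] at ha; omega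
      · intro a _; omega
      · intro a ha; rw [Finset.mem_Icc] at ha
        have h3 : a - 1 + 1 = a := by omega
        rw [h3]
    rw [h2]; ring
  have hS_pos : ∀ d : ℤ, 1 ≤ d →
      (∑ j ∈ Finset.range (p + 1), Acoef p φ (j : ℤ) * γ (d - (j : ℤ))) = 0 := by
    intro d hd
    rw [hsum_eq d, hYW d hd]; ring
  have hS_zero :
      (∑ j ∈ Finset.range (p + 1), Acoef p φ (j : ℤ) * γ ((0 : ℤ) - (j : ℤ))) = σ2 := by
    rw [hsum_eq 0, hYW0]
    have hc : ∀ i ∈ Finset.Icc 1 p, φ i * γ ((0 : ℤ) - i) = φ i * γ (i : ℤ) := by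
      intro i _
      congr 1
      rw [show (0 : ℤ) - i = -(i : ℤ) by ring, hsym]
    rw [Finset.sum_congr rfl hc]; ring
  -- the candidate column vector
  set v : Fin m → ℝ := fun k => Vcol p φ (k : ℤ) with hvdef
  -- inner sum computation
  have inner : ∀ i ∈ Finset.range (p + 1), ∀ s : Fin m,
      (∑ k : Fin m, Acoef p φ ((i : ℤ) + p - (k : ℤ)) * γ ((s : ℤ) - (k : ℤ)))
        = ∑ j ∈ Finset.range (p + 1),
            Acoef p φ (j : ℤ) * γ ((s : ℤ) - (p : ℤ) - (i : ℤ) + (j : ℤ)) := by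
    intro i hi s
    rw [Finset.mem_range] at hi
    have step1 : (∑ k : Fin m, Acoef p φ ((i : ℤ) + p - (k : ℤ)) * γ ((s : ℤ) - (k : ℤ)))
        = ∑ k ∈ Finset.range m,
            Acoef p φ ((i : ℤ) + p - (k : ℤ)) * γ ((s : ℤ) - (k : ℤ)) :=
      Fin.sum_univ_eq_sum_range
        (fun k => Acoef p φ ((i : ℤ) + p - (k : ℤ)) * γ ((s : ℤ) - (k : ℤ))) m
    rw [step1]
    have hsub : Finset.Icc i (i + p) ⊆ Finset.range m := by
      intro x hx; rw [Finset.mem_Icc] at hx; rw [Finset.mem_range]; omega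
    rw [← Finset.sum_subset hsub ?hz]
    case hz =>
      intro x hx hnx
      rw [Finset.mem_range] at hx
      rw [Finset.mem_Icc] at hnx
      have hA : Acoef p φ ((i : ℤ) + p - (x : ℤ)) = 0 := by
        rcases Nat.lt_or_ge x i with h | h
        · exact Acoef_gt p φ (by push_cast; omega)
        · exact Acoef_neg p φ (by push_cast; omega)
      rw [hA, zero_mul]
    refine Finset.sum_nbij' (fun k => i + p - k) (fun j => i + p - j) ?_ ?_ ?_ ?_ ?_
    · intro a ha; rw [Finset.mem_Icc] at ha; rw [Finset.mem_range]; omega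
    · intro a ha; rw [Finset.mem_range] at ha; rw [Finset.mem_Icc]; omega
    · intro a ha; rw [Finset.mem_Icc] at ha; omega
    · intro a ha; rw [Finset.mem_range] at ha; omega
    · intro a ha; rw [Finset.mem_Icc] at ha
      congr 1
      · congr 1; push_cast [Nat.cast_sub (by omega : a ≤ i + p)]; ring
      · congr 1; push_cast [Nat.cast_sub (by omega : a ≤ i + p)]; ring
  -- the mulVec identity
  have hmul : (Γ m).mulVec v
      = (σ2 • (Pi.single (⟨p, hpm⟩ : Fin m) (1 : ℝ) : Fin m → ℝ)) := by
    funext s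
    rw [Matrix.mulVec]
    rw [show ((Γ m) s ⬝ᵥ v) = ∑ k : Fin m, γ ((s : ℤ) - (k : ℤ)) * v k by
      rw [dotProduct]
      refine Finset.sum_congr rfl fun k _ => ?_
      rw [hΓ m s k, habs]]
    have expand : ∑ k : Fin m, γ ((s : ℤ) - (k : ℤ)) * v k
        = ∑ i ∈ Finset.range (p + 1), Acoef p φ (i : ℤ) *
            (∑ k : Fin m, Acoef p φ ((i : ℤ) + p - (k : ℤ)) * γ ((s : ℤ) - (k : ℤ))) := by
      have e1 : ∀ k : Fin m, γ ((s : ℤ) - (k : ℤ)) * v k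
          = ∑ i ∈ Finset.range (p + 1),
              Acoef p φ (i : ℤ) * (Acoef p φ ((i : ℤ) + p - (k : ℤ)) * γ ((s : ℤ) - (k : ℤ))) := by
        intro k
        rw [hvdef]
        simp only [Vcol]
        rw [Finset.mul_sum]
        exact Finset.sum_congr rfl fun i _ => by ring
      rw [Finset.sum_congr rfl (fun k _ => e1 k), Finset.sum_comm]
      exact Finset.sum_congr rfl fun i _ => by rw [Finset.mul_sum]
    rw [expand, Finset.sum_congr rfl (fun i hi => by rw [inner i hi s])]
    rcases lt_trichotomy (s : ℕ) p with hs | hs | hs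
    · -- s < p : everything vanishes
      have hz : ∀ i ∈ Finset.range (p + 1),
          Acoef p φ (i : ℤ) * (∑ j ∈ Finset.range (p + 1),
            Acoef p φ (j : ℤ) * γ ((s : ℤ) - (p : ℤ) - (i : ℤ) + (j : ℤ))) = 0 := by
        intro i _
        have harg : ∀ j ∈ Finset.range (p + 1),
            Acoef p φ (j : ℤ) * γ ((s : ℤ) - (p : ℤ) - (i : ℤ) + (j : ℤ))
              = Acoef p φ (j : ℤ) * γ (((p : ℤ) + (i : ℤ) - (s : ℤ)) - (j : ℤ)) := by
          intro j _
          congr 1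
          rw [show (s : ℤ) - (p : ℤ) - (i : ℤ) + (j : ℤ)
              = -(((p : ℤ) + (i : ℤ) - (s : ℤ)) - (j : ℤ)) by ring, hsym]
        rw [Finset.sum_congr rfl harg,
          hS_pos ((p : ℤ) + (i : ℤ) - (s : ℤ)) (by omega), mul_zero]
        
      rw [Finset.sum_congr rfl hz, Finset.sum_const_zero]
      have hne : s ≠ (⟨p, hpm⟩ : Fin m) := by
        intro h
        rw [Fin.ext_iff] at h
        simp only [Fin.val_mk] at h
        omega
      simp [Pi.single_apply, hne]
    · -- s = p : σ2
      have hz : ∀ i ∈ Finset.range (p + 1),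
          Acoef p φ (i : ℤ) * (∑ j ∈ Finset.range (p + 1),
            Acoef p φ (j : ℤ) * γ ((s : ℤ) - (p : ℤ) - (i : ℤ) + (j : ℤ)))
            = Acoef p φ (i : ℤ) * (∑ j ∈ Finset.range (p + 1),
                Acoef p φ (j : ℤ) * γ ((i : ℤ) - (j : ℤ))) := by
        intro i _
        congr 1
        refine Finset.sum_congr rfl fun j _ => ?_
        congr 1
        rw [show (s : ℤ) - (p : ℤ) - (i : ℤ) + (j : ℤ) = -((i : ℤ) - (j : ℤ)) by
          have : (s : ℤ) = (p : ℤ) := by omega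
          omega, hsym]
      rw [Finset.sum_congr rfl hz]
      rw [Finset.sum_eq_single_of_mem 0 (by simp)]
      · have hse : s = (⟨p, hpm⟩ : Fin m) := by rw [Fin.ext_iff]; exact hs
        simp only [Nat.cast_zero, Acoef_zero, one_mul, hS_zero, hse]
        simp [Pi.single_apply]
      · intro i _ hi0
        rw [hS_pos (i : ℤ) (by omega), mul_zero]
    · -- s > p : swap sums
      have hrw : ∀ i ∈ Finset.range (p + 1),
          Acoef p φ (i : ℤ) * (∑ j ∈ Finset.range (p + 1),
            Acoef p φ (j : ℤ) * γ ((s : ℤ) - (p : ℤ) - (i : ℤ) + (j : ℤ)))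
            = ∑ j ∈ Finset.range (p + 1), Acoef p φ (j : ℤ) *
                (Acoef p φ (i : ℤ) * γ (((s : ℤ) - (p : ℤ) + (j : ℤ)) - (i : ℤ))) := by
        intro i _
        rw [Finset.mul_sum]
        refine Finset.sum_congr rfl fun j _ => ?_
        rw [show (s : ℤ) - (p : ℤ) - (i : ℤ) + (j : ℤ)
            = ((s : ℤ) - (p : ℤ) + (j : ℤ)) - (i : ℤ) by ring]
        ring
      rw [Finset.sum_congr rfl hrw, Finset.sum_comm]
      have hz : ∀ j ∈ Finset.range (p + 1),
          (∑ i ∈ Finset.range (p + 1), Acoef p φ (j : ℤ) *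
            (Acoef p φ (i : ℤ) * γ (((s : ℤ) - (p : ℤ) + (j : ℤ)) - (i : ℤ)))) = 0 := by
        intro j _
        rw [← Finset.mul_sum,
          hS_pos ((s : ℤ) - (p : ℤ) + (j : ℤ)) (by omega), mul_zero]
      rw [Finset.sum_congr rfl hz, Finset.sum_const_zero]
      have hne : s ≠ (⟨p, hpm⟩ : Fin m) := by
        intro h
        rw [Fin.ext_iff] at h
        simp only [Fin.val_mk] at h
        omega
      simp [Pi.single_apply, hne]
  -- linear algebra
  have hdet : IsUnit (Γ m).det :=
    ((Matrix.isUnit_iff_isUnit_det _).1 (hpd m (by omega)).isUnit)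
  have hv : v = (Γ m)⁻¹.mulVec
      (σ2 • (Pi.single (⟨p, hpm⟩ : Fin m) (1 : ℝ) : Fin m → ℝ)) := by
    rw [← hmul, Matrix.mulVec_mulVec, Matrix.nonsing_inv_mul _ hdet, Matrix.one_mulVec]
  have hfin : v k = σ2 * (Γ m)⁻¹ k ⟨p, hpm⟩ := by
    rw [hv, Matrix.mulVec_smul, Matrix.mulVec_single]
    simp [mul_comm]
  rw [← hfin]

/-- Context: AR(p) coefficients `φ`, white-noise variance `σ2`, autocovariance
sequence `γ` satisfying the Yule–Walker equations, and the autocovariance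
Toeplitz matrices `Γ m`, assumed positive definite for `m ≥ 1`. -/
theorem stmt_9
    (p : ℕ) (hp : 1 ≤ p)
    (φ : ℕ → ℝ)
    (σ2 : ℝ) (hσ : 0 < σ2)
    (γ : ℤ → ℝ)
    (hsym : ∀ j : ℤ, γ (-j) = γ j)
    (hYW0 : γ 0 = (∑ i ∈ Finset.Icc 1 p, φ i * γ (i : ℤ)) + σ2)
    (hYW : ∀ j : ℤ, 1 ≤ j → γ j = ∑ i ∈ Finset.Icc 1 p, φ i * γ (j - (i : ℤ)))
    (Γ : (m : ℕ) → Matrix (Fin m) (Fin m) ℝ)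
    (hΓ : ∀ m : ℕ, ∀ i j : Fin m, Γ m i j = γ |(i : ℤ) - (j : ℤ)|)
    (hpd : ∀ m : ℕ, 1 ≤ m → (Γ m).PosDef)
    (m : ℕ) (hm : 2 * p + 2 ≤ m) :
    (∀ (i : ℕ) (hi1 : 1 ≤ i) (hi2 : i ≤ m - p - 1),
      σ2 * (Γ m)⁻¹ ⟨p + i - 1, by omega⟩ ⟨p, by omega⟩
        = σ2 * (Γ (m - 1))⁻¹ ⟨p + i - 1, by omega⟩ ⟨p, by omega⟩) ∧
    σ2 * (Γ m)⁻¹ ⟨m - 1, by omega⟩ ⟨p, by omega⟩ = 0 := by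
  constructor
  · intro i hi1 hi2
    rw [key p hp φ σ2 γ hsym hYW0 hYW Γ hΓ hpd m (by omega) (by omega)
        ⟨p + i - 1, by omega⟩,
      key p hp φ σ2 γ hsym hYW0 hYW Γ hΓ hpd (m - 1) (by omega) (by omega)
        ⟨p + i - 1, by omega⟩]
  · rw [key p hp φ σ2 γ hsym hYW0 hYW Γ hΓ hpd m (by omega) (by omega)
        ⟨m - 1, by omega⟩]
    show Vcol p φ ((m - 1 : ℕ) : ℤ) = 0
    unfold Vcol
    refine Finset.sum_eq_zero fun i hi => ?_
    rw [Finset.mem_range] at hi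
    rw [Acoef_neg p φ (j := (i : ℤ) + p - ((m - 1 : ℕ) : ℤ)) (by omega), mul_zero]
end

section
/- Closed form for the sub-diagonals of NLRC (Theorem: Closed Form for NLRC_{p,m}): for every integer m ≥ p+1, every offset 0 ≤ ℓ ≤ p, and every index ℓ+1 ≤ i ≤ m−p, NLRC_{p,m}(i, i−ℓ) = Σ_{k=0}^{min(m−p−i, p−ℓ)} φ_k · φ_{k+ℓ}, where φ₀ := −1. -/
open Matrix Finset

/-- Banded lower-triangular AR matrix (bottom rows only). -/
def nlrcA (p : ℕ) (φ : ℕ → ℝ) (m : ℕ) (u t : Fin m) : ℝ :=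
  if p ≤ (u : ℕ) ∧ (t : ℕ) ≤ (u : ℕ) ∧ (u : ℕ) ≤ (t : ℕ) + p then -φ ((u : ℕ) - (t : ℕ)) else 0

/-- The Yule–Walker filter sum. -/
def nlrcF (p : ℕ) (φ : ℕ → ℝ) (γ : ℤ → ℝ) (z : ℤ) : ℝ :=
  ∑ d ∈ Finset.range (p + 1), φ d * γ (z - d)

lemma nlrc_gamma_abs (γ : ℤ → ℝ) (hsym : ∀ j : ℤ, γ (-j) = γ j) (z : ℤ) :
    γ |z| = γ z := by
  rcases le_or_gt 0 z with h | h
  · rw [abs_of_nonneg h]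
  · rw [abs_of_neg h, hsym]

lemma nlrc_sum_shift (p : ℕ) (f : ℕ → ℝ) :
    ∑ i ∈ Finset.Icc 1 p, f i = ∑ i ∈ Finset.range p, f (i + 1) := by
  rw [← Finset.Ico_add_one_right_eq_Icc, Finset.sum_Ico_eq_sum_range]
  simp [add_comm]

lemma nlrcF_pos (p : ℕ) (φ : ℕ → ℝ) (hφ0 : φ 0 = -1) (γ : ℤ → ℝ)
    (hYW : ∀ j : ℤ, 1 ≤ j → γ j = ∑ i ∈ Finset.Icc 1 p, φ i * γ (j - (i : ℤ)))
    (z : ℤ) (hz : 1 ≤ z) : nlrcF p φ γ z = 0 := by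
  have h := hYW z hz
  rw [nlrc_sum_shift p (fun i => φ i * γ (z - (i : ℤ)))] at h
  rw [nlrcF, Finset.sum_range_succ']
  simp only [Nat.cast_zero, sub_zero, hφ0] at h ⊢
  linarith

lemma nlrcF_zero (p : ℕ) (φ : ℕ → ℝ) (hφ0 : φ 0 = -1) (σ2 : ℝ) (γ : ℤ → ℝ)
    (hsym : ∀ j : ℤ, γ (-j) = γ j)
    (hYW0 : γ 0 = (∑ i ∈ Finset.Icc 1 p, φ i * γ (i : ℤ)) + σ2) :
    nlrcF p φ γ 0 = -σ2 := by
  have h := hYW0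
  rw [nlrc_sum_shift p (fun i => φ i * γ (i : ℤ))] at h
  rw [nlrcF, Finset.sum_range_succ']
  have hγ : ∀ d : ℕ, γ ((0 : ℤ) - (d : ℤ)) = γ (d : ℤ) := by
    intro d; rw [zero_sub, hsym]
  simp only [hγ, Nat.cast_zero, sub_zero, hφ0] at h ⊢
  linarith

lemma nlrcS0 (p : ℕ) (φ : ℕ → ℝ) (hφ0 : φ 0 = -1) (γ : ℤ → ℝ)
    (hsym : ∀ j : ℤ, γ (-j) = γ j)
    (hYW : ∀ j : ℤ, 1 ≤ j → γ j = ∑ i ∈ Finset.Icc 1 p, φ i * γ (j - (i : ℤ)))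
    (j : ℤ) (hj : 1 ≤ j) :
    ∑ e ∈ Finset.range (p + 1), φ e * nlrcF p φ γ ((e : ℤ) - j) = 0 := by
  simp only [nlrcF, Finset.mul_sum]
  rw [Finset.sum_comm]
  apply Finset.sum_eq_zero
  intro d _
  have hkey : ∑ e ∈ Finset.range (p + 1), φ e * (φ d * γ ((e : ℤ) - j - d))
      = φ d * nlrcF p φ γ (j + d) := by
    rw [nlrcF, Finset.mul_sum]
    apply Finset.sum_congr rfl
    intro e _
    rw [show (e : ℤ) - j - d = -((j + (d : ℤ)) - e) by ring, hsym]
    ring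
  rw [hkey, nlrcF_pos p φ hφ0 γ hYW _ (by omega), mul_zero]

lemma nlrc_sum_fin {m N : ℕ} (g : Fin m → ℝ) (e : ℕ → Fin m)
    (hinj : ∀ a ∈ Finset.range (N + 1), ∀ b ∈ Finset.range (N + 1), e a = e b → a = b)
    (hsupp : ∀ v : Fin m, g v ≠ 0 → ∃ k ∈ Finset.range (N + 1), e k = v) :
    ∑ v, g v = ∑ k ∈ Finset.range (N + 1), g (e k) := by
  rw [← Finset.sum_image (f := g) hinj]
  apply (Finset.sum_subset (Finset.subset_univ _) ?_).symm
  intro v _ hv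
  by_contra h
  obtain ⟨k, hk, hke⟩ := hsupp v h
  exact hv (hke ▸ Finset.mem_image_of_mem e hk)

/-- Context: AR(p) coefficients `φ`, white-noise variance `σ2`, autocovariance
sequence `γ` satisfying the Yule–Walker equations, and the autocovariance
Toeplitz matrices `Γ m`, assumed positive definite for `m ≥ 1`. -/
theorem stmt_11
    (p : ℕ) (hp : 1 ≤ p)
    (φ : ℕ → ℝ) (hφ0 : φ 0 = -1)
    (σ2 : ℝ) (hσ : 0 < σ2)
    (γ : ℤ → ℝ)
    (hsym : ∀ j : ℤ, γ (-j) = γ j)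
    (hYW0 : γ 0 = (∑ i ∈ Finset.Icc 1 p, φ i * γ (i : ℤ)) + σ2)
    (hYW : ∀ j : ℤ, 1 ≤ j → γ j = ∑ i ∈ Finset.Icc 1 p, φ i * γ (j - (i : ℤ)))
    (Γ : (m : ℕ) → Matrix (Fin m) (Fin m) ℝ)
    (hΓ : ∀ m : ℕ, ∀ i j : Fin m, Γ m i j = γ |(i : ℤ) - (j : ℤ)|)
    (hpd : ∀ m : ℕ, 1 ≤ m → (Γ m).PosDef)
    (m : ℕ) (hm : p + 1 ≤ m) (ℓ : ℕ) (hℓ : ℓ ≤ p)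
    (i : ℕ) (hi1 : ℓ + 1 ≤ i) (hi2 : i ≤ m - p) :
    σ2 * (Γ m)⁻¹ ⟨p + i - 1, by omega⟩ ⟨p + i - ℓ - 1, by omega⟩
      = ∑ k ∈ Finset.range (min (m - p - i) (p - ℓ) + 1), φ k * φ (k + ℓ) := by
  have hm0 : 0 < m := by omega
  have hval : ∀ (a : ℕ) (h : a < m), ((⟨a, h⟩ : Fin m) : ℕ) = a := fun _ _ => rfl
  have hr0m : p + i - 1 < m := by omega
  have hc0m : p + i - ℓ - 1 < m := by omega
  set r0 : ℕ := p + i - 1 with hr0def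
  set c0 : ℕ := p + i - ℓ - 1 with hc0def
  set r : Fin m := ⟨r0, hr0m⟩ with hrdef
  set c : Fin m := ⟨c0, hc0m⟩ with hcdef
  have hpc0 : p ≤ c0 := by omega
  have hc0r0 : c0 + ℓ = r0 := by omega
  set w : Fin m → ℝ := fun s => ∑ u : Fin m, nlrcA p φ m u s * nlrcA p φ m u c with hwdef
  set E : ℕ := min p (m - 1 - c0) with hEdef
  -- inner row expansion
  have inner_eq : ∀ (x u : Fin m), p ≤ (u : ℕ) →
      ∑ v : Fin m, nlrcA p φ m u v * Γ m x v
        = ∑ d ∈ Finset.range (p + 1), (-φ d) * γ ((x : ℤ) - (u : ℕ) + d) := by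
    intro x u hpu
    have h := nlrc_sum_fin (g := fun v => nlrcA p φ m u v * Γ m x v) (N := p)
      (e := fun d => ⟨((u : ℕ) - d) % m, Nat.mod_lt _ hm0⟩) ?_ ?_
    · rw [h]
      apply Finset.sum_congr rfl
      intro d hd
      have hdp : d ≤ p := by simpa using Nat.lt_succ_iff.mp (Finset.mem_range.mp hd)
      have hdu : d ≤ (u : ℕ) := le_trans hdp hpu
      have hmod : ((u : ℕ) - d) % m = (u : ℕ) - d := Nat.mod_eq_of_lt (by omega)
      have hA : nlrcA p φ m u ⟨((u : ℕ) - d) % m, Nat.mod_lt _ hm0⟩ = -φ d := by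
        rw [nlrcA]
        simp only [hval, hmod]
        rw [if_pos (by omega)]
        have he : (u : ℕ) - ((u : ℕ) - d) = d := by omega
        rw [he]
      have hΓ' : Γ m x ⟨((u : ℕ) - d) % m, Nat.mod_lt _ hm0⟩ = γ ((x : ℤ) - (u : ℕ) + d) := by
        rw [hΓ, nlrc_gamma_abs γ hsym]
        congr 1
        simp only [hval, hmod]
        omega
      show nlrcA p φ m u _ * Γ m x _ = _
      rw [hA, hΓ']
    · intro a ha b hb hab
      simp only [Finset.mem_range] at ha hb
      have hv := congrArg Fin.val hab
      simp only [hval] at hv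
      rw [Nat.mod_eq_of_lt (by omega : (u : ℕ) - a < m),
        Nat.mod_eq_of_lt (by omega : (u : ℕ) - b < m)] at hv
      omega
    · intro v hv
      have hAne : nlrcA p φ m u v ≠ 0 := by
        intro h0
        exact hv (by simp [h0])
      rw [nlrcA] at hAne
      by_cases hcond : p ≤ (u : ℕ) ∧ (v : ℕ) ≤ (u : ℕ) ∧ (u : ℕ) ≤ (v : ℕ) + p
      · refine ⟨(u : ℕ) - (v : ℕ), Finset.mem_range.mpr (by omega), ?_⟩
        apply Fin.ext
        show ((u : ℕ) - ((u : ℕ) - (v : ℕ))) % m = (v : ℕ)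
        rw [Nat.mod_eq_of_lt (by omega)]
        omega
      · exact absurd (if_neg hcond) hAne
  -- the key computation : Γ * w = σ2 · e_c
  have hΓw : ∀ x : Fin m, ∑ v : Fin m, Γ m x v * w v = if x = c then σ2 else 0 := by
    intro x
    set j : ℤ := (x : ℤ) - c0 with hjdef
    have hxm : (x : ℕ) < m := x.isLt
    have swap : ∑ v : Fin m, Γ m x v * w v
        = ∑ u : Fin m, nlrcA p φ m u c * (∑ v : Fin m, nlrcA p φ m u v * Γ m x v) := by
      simp only [hwdef, Finset.mul_sum]
      rw [Finset.sum_comm]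
      exact Finset.sum_congr rfl fun u _ => Finset.sum_congr rfl fun v _ => by ring
    have houter := nlrc_sum_fin
      (g := fun u => nlrcA p φ m u c * (∑ v : Fin m, nlrcA p φ m u v * Γ m x v)) (N := E)
      (e := fun k => ⟨(c0 + k) % m, Nat.mod_lt _ hm0⟩) ?_ ?_
    · have main : ∑ v : Fin m, Γ m x v * w v
          = ∑ k ∈ Finset.range (E + 1), φ k * nlrcF p φ γ ((k : ℤ) - j) := by
        rw [swap, houter]
        apply Finset.sum_congr rfl
        intro k hk
        have hkE : k ≤ E := by simpa using Nat.lt_succ_iff.mp (Finset.mem_range.mp hk)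
        have hmod : (c0 + k) % m = c0 + k := Nat.mod_eq_of_lt (by omega)
        have hup : p ≤ ((⟨(c0 + k) % m, Nat.mod_lt _ hm0⟩ : Fin m) : ℕ) := by
          simp only [hval, hmod]; omega
        show nlrcA p φ m _ c * (∑ v : Fin m, nlrcA p φ m _ v * Γ m x v) = _
        rw [inner_eq x _ hup]
        have hAc : nlrcA p φ m ⟨(c0 + k) % m, Nat.mod_lt _ hm0⟩ c = -φ k := by
          rw [nlrcA]
          simp only [hcdef, hval, hmod]
          rw [if_pos (by omega)]
          have he : c0 + k - c0 = k := by omega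
          rw [he]
        rw [hAc, nlrcF, Finset.mul_sum, Finset.mul_sum]
        apply Finset.sum_congr rfl
        intro d _
        have hγeq : γ ((x : ℤ) - (((⟨(c0 + k) % m, Nat.mod_lt _ hm0⟩ : Fin m)) : ℕ) + d)
            = γ ((k : ℤ) - j - d) := by
          rw [show (x : ℤ) - (((⟨(c0 + k) % m, Nat.mod_lt _ hm0⟩ : Fin m)) : ℕ) + d
              = -((k : ℤ) - j - d) by simp only [hval, hmod, hjdef]; push_cast; ring, hsym]
        rw [hγeq]
        ring
      rw [main]
      by_cases hxc : x = c
      · rw [if_pos hxc]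
        have hj0 : j = 0 := by
          rw [hjdef, hxc, hcdef]
          simp [hval]
        rw [hj0]
        simp only [sub_zero]
        rw [Finset.sum_eq_single 0]
        · rw [Nat.cast_zero, nlrcF_zero p φ hφ0 σ2 γ hsym hYW0, hφ0]
          ring
        · intro b _ hb0
          rw [nlrcF_pos p φ hφ0 γ hYW _ (by omega), mul_zero]
        · intro h
          exact absurd (Finset.mem_range.mpr (by omega)) h
      · rw [if_neg hxc]
        have hjne : j ≠ 0 := by
          intro h0
          apply hxc
          apply Fin.ext
          show (x : ℕ) = c0
          rw [hjdef] at h0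
          omega
        rcases lt_or_gt_of_ne hjne with hjneg | hjpos
        · apply Finset.sum_eq_zero
          intro k _
          rw [nlrcF_pos p φ hφ0 γ hYW _ (by omega), mul_zero]
        · have hj1 : 1 ≤ j := hjpos
          have hfull := nlrcS0 p φ hφ0 γ hsym hYW j hj1
          have hEp : E + 1 ≤ p + 1 := by omega
          have hsplit := Finset.sum_Ico_consecutive
            (fun e => φ e * nlrcF p φ γ ((e : ℤ) - j)) (Nat.zero_le (E + 1)) hEp
          rw [← Finset.range_eq_Ico] at hsplit
          have htail : ∑ e ∈ Finset.Ico (E + 1) (p + 1), φ e * nlrcF p φ γ ((e : ℤ) - j) = 0 := by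
            apply Finset.sum_eq_zero
            intro e he
            rw [Finset.mem_Ico] at he
            have h1e : 1 ≤ (e : ℤ) - j := by
              rw [hjdef]
              have hE2 : E = min p (m - 1 - c0) := hEdef
              omega
            rw [nlrcF_pos p φ hφ0 γ hYW _ h1e, mul_zero]
          calc ∑ e ∈ Finset.range (E + 1), φ e * nlrcF p φ γ ((e : ℤ) - j)
              = ∑ e ∈ Finset.range (E + 1), φ e * nlrcF p φ γ ((e : ℤ) - j)
                + ∑ e ∈ Finset.Ico (E + 1) (p + 1), φ e * nlrcF p φ γ ((e : ℤ) - j) := by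
                rw [htail, add_zero]
            _ = ∑ e ∈ Finset.range (p + 1), φ e * nlrcF p φ γ ((e : ℤ) - j) := by
                rw [Finset.range_eq_Ico] at hsplit ⊢
                rw [Finset.range_eq_Ico]
                exact hsplit
            _ = 0 := hfull
    · intro a ha b hb hab
      simp only [Finset.mem_range] at ha hb
      have hv := congrArg Fin.val hab
      simp only [hval] at hv
      rw [Nat.mod_eq_of_lt (by omega : c0 + a < m),
        Nat.mod_eq_of_lt (by omega : c0 + b < m)] at hv
      omega
    · intro u hu
      have hum : (u : ℕ) < m := u.isLt
      have hAne : nlrcA p φ m u c ≠ 0 := by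
        intro h0
        exact hu (by simp [h0])
      rw [nlrcA] at hAne
      by_cases hcond : p ≤ (u : ℕ) ∧ (c : ℕ) ≤ (u : ℕ) ∧ (u : ℕ) ≤ (c : ℕ) + p
      · have hcval : (c : ℕ) = c0 := rfl
        rw [hcval] at hcond
        refine ⟨(u : ℕ) - c0, Finset.mem_range.mpr (by omega), ?_⟩
        apply Fin.ext
        show (c0 + ((u : ℕ) - c0)) % m = (u : ℕ)
        rw [Nat.mod_eq_of_lt (by omega)]
        omega
      · exact absurd (if_neg hcond) hAne
  -- convert to mulVec
  have hmv : (Γ m) *ᵥ w = Pi.single c σ2 := by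
    funext x
    show ∑ v : Fin m, Γ m x v * w v = _
    rw [hΓw x, Pi.single_apply]
  have hdet : IsUnit (Γ m).det :=
    isUnit_iff_ne_zero.mpr (Matrix.PosDef.det_pos (hpd m (by omega))).ne'
  have hw_eq : w = (Γ m)⁻¹ *ᵥ Pi.single c σ2 := by
    rw [← hmv, Matrix.mulVec_mulVec, Matrix.nonsing_inv_mul _ hdet, Matrix.one_mulVec]
  have hwr : w r = (Γ m)⁻¹ r c * σ2 := by
    rw [hw_eq, Matrix.mulVec_single]
    rfl
  -- compute w r
  set K : ℕ := min (m - p - i) (p - ℓ) with hKdef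
  have hwr2 : w r = ∑ k ∈ Finset.range (K + 1), φ k * φ (k + ℓ) := by
    have h := nlrc_sum_fin (g := fun u => nlrcA p φ m u r * nlrcA p φ m u c) (N := K)
      (e := fun k => ⟨(r0 + k) % m, Nat.mod_lt _ hm0⟩) ?_ ?_
    · rw [hwdef]
      show ∑ u : Fin m, nlrcA p φ m u r * nlrcA p φ m u c = _
      rw [h]
      apply Finset.sum_congr rfl
      intro k hk
      have hkK : k ≤ K := by simpa using Nat.lt_succ_iff.mp (Finset.mem_range.mp hk)
      have hKm : K = min (m - p - i) (p - ℓ) := hKdef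
      have hmod : (r0 + k) % m = r0 + k := Nat.mod_eq_of_lt (by omega)
      have hAr : nlrcA p φ m ⟨(r0 + k) % m, Nat.mod_lt _ hm0⟩ r = -φ k := by
        rw [nlrcA]
        simp only [hrdef, hval, hmod]
        rw [if_pos (by omega)]
        have he : r0 + k - r0 = k := by omega
        rw [he]
      have hAc : nlrcA p φ m ⟨(r0 + k) % m, Nat.mod_lt _ hm0⟩ c = -φ (k + ℓ) := by
        rw [nlrcA]
        simp only [hcdef, hval, hmod]
        rw [if_pos (by omega)]
        have he : r0 + k - c0 = k + ℓ := by omega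
        rw [he]
      show nlrcA p φ m _ r * nlrcA p φ m _ c = _
      rw [hAr, hAc]
      ring
    · intro a ha b hb hab
      simp only [Finset.mem_range] at ha hb
      have hKm : K = min (m - p - i) (p - ℓ) := hKdef
      have hv := congrArg Fin.val hab
      simp only [hval] at hv
      rw [Nat.mod_eq_of_lt (by omega : r0 + a < m),
        Nat.mod_eq_of_lt (by omega : r0 + b < m)] at hv
      omega
    · intro u hu
      have hum : (u : ℕ) < m := u.isLt
      have hKm : K = min (m - p - i) (p - ℓ) := hKdef
      have hAr : nlrcA p φ m u r ≠ 0 := by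
        intro h0
        exact hu (by simp [h0])
      have hAc : nlrcA p φ m u c ≠ 0 := by
        intro h0
        exact hu (by simp [h0])
      rw [nlrcA] at hAr hAc
      by_cases h1 : p ≤ (u : ℕ) ∧ (r : ℕ) ≤ (u : ℕ) ∧ (u : ℕ) ≤ (r : ℕ) + p
      · by_cases h2 : p ≤ (u : ℕ) ∧ (c : ℕ) ≤ (u : ℕ) ∧ (u : ℕ) ≤ (c : ℕ) + p
        · have hrval : (r : ℕ) = r0 := rfl
          have hcval : (c : ℕ) = c0 := rfl
          rw [hrval] at h1
          rw [hcval] at h2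
          refine ⟨(u : ℕ) - r0, Finset.mem_range.mpr (by omega), ?_⟩
          apply Fin.ext
          show (r0 + ((u : ℕ) - r0)) % m = (u : ℕ)
          rw [Nat.mod_eq_of_lt (by omega)]
          omega
        · exact absurd (if_neg h2) hAc
      · exact absurd (if_neg h1) hAr
  have goal_eq : σ2 * (Γ m)⁻¹ r c = ∑ k ∈ Finset.range (K + 1), φ k * φ (k + ℓ) := by
    rw [mul_comm, ← hwr, hwr2]
  exact goal_eq
end

section
/- Band structure of NLRC: for every integer m ≥ p+1 and all indices 1 ≤ i, j ≤ m−p with |i − j| > p, NLRC_{p,m}(i,j) = 0. -/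
open Matrix Finset

namespace Stmt12Aux

/-- Coefficients of the AR filter row: `1` at lag 0, `-φ i` at lags `1..p`, `0` otherwise. -/
noncomputable def arc (p : ℕ) (φ : ℕ → ℝ) (d : ℤ) : ℝ :=
  if d = 0 then 1 else if 0 < d ∧ d ≤ (p : ℤ) then -φ d.toNat else 0

lemma arc_zero (p : ℕ) (φ : ℕ → ℝ) : arc p φ 0 = 1 := by simp [arc]

lemma arc_neg {p : ℕ} {φ : ℕ → ℝ} {d : ℤ} (h : d < 0) : arc p φ d = 0 := by
  rw [arc, if_neg (by omega), if_neg (by omega)]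

lemma arc_gt {p : ℕ} {φ : ℕ → ℝ} {d : ℤ} (h : (p : ℤ) < d) : arc p φ d = 0 := by
  rw [arc, if_neg (by omega), if_neg (by omega)]

lemma arc_mid {p : ℕ} (φ : ℕ → ℝ) {d : ℤ} (h1 : 1 ≤ d) (h2 : d ≤ (p : ℤ)) :
    arc p φ d = -φ d.toNat := by
  rw [arc, if_neg (by omega), if_pos ⟨by omega, h2⟩]

lemma arc_support {p : ℕ} {φ : ℕ → ℝ} {d : ℤ} (h : arc p φ d ≠ 0) :
    0 ≤ d ∧ d ≤ (p : ℤ) := by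
  by_contra hc
  rcases (not_and_or.mp hc) with h' | h'
  · exact h (arc_neg (by omega))
  · exact h (arc_gt (by omega))

/-- The key Yule–Walker sum computation. -/
lemma key (p : ℕ) (hp : 1 ≤ p) (φ : ℕ → ℝ) (σ2 : ℝ) (γ : ℤ → ℝ)
    (hsym : ∀ j : ℤ, γ (-j) = γ j)
    (hYW0 : γ 0 = (∑ i ∈ Finset.Icc 1 p, φ i * γ (i : ℤ)) + σ2)
    (hYW : ∀ j : ℤ, 1 ≤ j → γ j = ∑ i ∈ Finset.Icc 1 p, φ i * γ (j - (i : ℤ)))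
    (m s a : ℕ) (hps : p ≤ s) (hsm : s < m) (has : a ≤ s) :
    ∑ b ∈ Finset.range m, γ ((a : ℤ) - b) * arc p φ ((s : ℤ) - b)
      = if a = s then σ2 else 0 := by
  have hs1 : 1 ≤ s := le_trans hp hps
  -- restrict the sum to Icc (s-p) s
  have hsub : Finset.Icc (s - p) s ⊆ Finset.range m := by
    intro x hx; simp only [Finset.mem_Icc] at hx; simp only [Finset.mem_range]; omega
  have hz : ∀ b ∈ Finset.range m, b ∉ Finset.Icc (s - p) s →
      γ ((a : ℤ) - b) * arc p φ ((s : ℤ) - b) = 0 := by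
    intro b _ hb
    simp only [Finset.mem_Icc, not_and_or, not_le] at hb
    rcases hb with hb | hb
    · rw [arc_gt (by omega), mul_zero]
    · rw [arc_neg (by omega), mul_zero]
  rw [← Finset.sum_subset hsub hz]
  -- peel off the top term b = s
  have hins : Finset.Icc (s - p) s = insert s (Finset.Icc (s - p) (s - 1)) := by
    ext x; simp only [Finset.mem_Icc, Finset.mem_insert]; omega
  rw [hins, Finset.sum_insert (by simp only [Finset.mem_Icc]; omega)]
  rw [sub_self, arc_zero, mul_one]
  -- reindex the remaining sum by i = s - b
  have hre : ∑ b ∈ Finset.Icc (s - p) (s - 1), γ ((a : ℤ) - b) * arc p φ ((s : ℤ) - b)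
      = ∑ i ∈ Finset.Icc 1 p, γ ((a : ℤ) - s + i) * (-φ i) := by
    refine Finset.sum_nbij' (fun b => s - b) (fun i => s - i) ?_ ?_ ?_ ?_ ?_
    · intro b hb; simp only [Finset.mem_Icc] at hb ⊢; omega
    · intro i hi; simp only [Finset.mem_Icc] at hi ⊢; omega
    · intro b hb; simp only [Finset.mem_Icc] at hb; show s - (s - b) = b; omega
    · intro i hi; simp only [Finset.mem_Icc] at hi; show s - (s - i) = i; omega
    · intro b hb
      simp only [Finset.mem_Icc] at hb
      rw [arc_mid φ (by omega) (by omega)]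
      have h1 : ((s : ℤ) - b).toNat = s - b := by omega
      have h2 : ((s - b : ℕ) : ℤ) = (s : ℤ) - b := by omega
      rw [h1]
      congr 2
      rw [h2]; ring
  rw [hre]
  by_cases ha : a = s
  · subst ha
    have : ∑ i ∈ Finset.Icc 1 p, γ ((a : ℤ) - a + i) * (-φ i)
        = -∑ i ∈ Finset.Icc 1 p, φ i * γ (i : ℤ) := by
      rw [← Finset.sum_neg_distrib]
      refine Finset.sum_congr rfl fun i _ => ?_
      rw [show (a : ℤ) - a + i = (i : ℤ) by ring]; ring
    rw [this, sub_self, hYW0, if_pos rfl]; ring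
  · rw [if_neg ha]
    have hd : (1 : ℤ) ≤ (s : ℤ) - a := by
      have : a < s := lt_of_le_of_ne has ha
      omega
    have e1 : γ ((a : ℤ) - s) = γ ((s : ℤ) - a) := by
      rw [show (a : ℤ) - s = -((s : ℤ) - a) by ring, hsym]
    have e2 : ∑ i ∈ Finset.Icc 1 p, γ ((a : ℤ) - s + i) * (-φ i)
        = -∑ i ∈ Finset.Icc 1 p, φ i * γ ((s : ℤ) - a - i) := by
      rw [← Finset.sum_neg_distrib]
      refine Finset.sum_congr rfl fun i _ => ?_
      rw [show (a : ℤ) - s + i = -((s : ℤ) - a - i) by ring, hsym]; ring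
    rw [e1, e2, hYW ((s : ℤ) - a) hd]; ring

/-- The banded lower-triangular AR filter matrix. -/
noncomputable def Lmat (p : ℕ) (φ : ℕ → ℝ) (m : ℕ) : Matrix (Fin m) (Fin m) ℝ :=
  Matrix.of fun t b => if (t : ℕ) < p then (if b = t then 1 else 0)
    else arc p φ ((t : ℤ) - b)

lemma Lmat_apply (p : ℕ) (φ : ℕ → ℝ) (m : ℕ) (t b : Fin m) :
    Lmat p φ m t b = if (t : ℕ) < p then (if b = t then 1 else 0)
      else arc p φ ((t : ℤ) - b) := rfl

lemma Lmat_upper {p : ℕ} {φ : ℕ → ℝ} {m : ℕ} {t b : Fin m} (h : (t : ℕ) < (b : ℕ)) :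
    Lmat p φ m t b = 0 := by
  rw [Lmat_apply]
  split
  · rw [if_neg (fun hc => by rw [hc] at h; omega)]
  · exact arc_neg (by omega)

lemma Lmat_diag {p : ℕ} {φ : ℕ → ℝ} {m : ℕ} (t : Fin m) : Lmat p φ m t t = 1 := by
  rw [Lmat_apply]
  split
  · rw [if_pos rfl]
  · rw [sub_self]; exact arc_zero p φ

/-- The block-diagonal matrix `diag(Γ_p, σ² I)`. -/
noncomputable def Mmat (p : ℕ) (σ2 : ℝ) (γ : ℤ → ℝ) (m : ℕ) : Matrix (Fin m) (Fin m) ℝ :=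
  Matrix.of fun t s => if (t : ℕ) < p ∧ (s : ℕ) < p then γ ((t : ℤ) - s)
    else if t = s then σ2 else 0

lemma Mmat_apply (p : ℕ) (σ2 : ℝ) (γ : ℤ → ℝ) (m : ℕ) (t s : Fin m) :
    Mmat p σ2 γ m t s = if (t : ℕ) < p ∧ (s : ℕ) < p then γ ((t : ℤ) - s)
      else if t = s then σ2 else 0 := rfl

/-- Candidate inverse of `Mmat`: `diag(G, σ⁻² I)` where `G = Γ_p⁻¹`. -/
noncomputable def Nmat (p : ℕ) (σ2 : ℝ) (G : Matrix (Fin p) (Fin p) ℝ) (m : ℕ) :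
    Matrix (Fin m) (Fin m) ℝ :=
  Matrix.of fun t s => if h : (t : ℕ) < p ∧ (s : ℕ) < p then G ⟨t, h.1⟩ ⟨s, h.2⟩
    else if t = s then σ2⁻¹ else 0

lemma Nmat_apply (p : ℕ) (σ2 : ℝ) (G : Matrix (Fin p) (Fin p) ℝ) (m : ℕ) (t s : Fin m) :
    Nmat p σ2 G m t s = if h : (t : ℕ) < p ∧ (s : ℕ) < p then G ⟨t, h.1⟩ ⟨s, h.2⟩
      else if t = s then σ2⁻¹ else 0 := rfl

lemma sum_eq_sum_castLE {m p : ℕ} (h : p ≤ m) (g : Fin m → ℝ)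
    (hg : ∀ a : Fin m, p ≤ (a : ℕ) → g a = 0) :
    ∑ a : Fin m, g a = ∑ a : Fin p, g (Fin.castLE h a) := by
  have hmap : ∑ a : Fin p, g (Fin.castLE h a) = ∑ x ∈ Finset.univ.map (Fin.castLEEmb h), g x :=
    (Finset.sum_map Finset.univ (Fin.castLEEmb h) g).symm
  rw [hmap]
  refine (Finset.sum_subset (Finset.subset_univ _) ?_).symm
  intro x _ hx
  refine hg x ?_
  by_contra hc
  push_neg at hc
  exact hx (Finset.mem_map.2 ⟨⟨(x : ℕ), hc⟩, Finset.mem_univ _, by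
    simp [Fin.castLEEmb, Fin.ext_iff]⟩)

end Stmt12Aux

open Stmt12Aux

/-- Context: AR(p) coefficients `φ`, white-noise variance `σ2`, autocovariance
sequence `γ` satisfying the Yule–Walker equations, and the autocovariance
Toeplitz matrices `Γ m`, assumed positive definite for `m ≥ 1`. -/
theorem stmt_12
    (p : ℕ) (hp : 1 ≤ p)
    (φ : ℕ → ℝ)
    (σ2 : ℝ) (hσ : 0 < σ2)
    (γ : ℤ → ℝ)
    (hsym : ∀ j : ℤ, γ (-j) = γ j)
    (hYW0 : γ 0 = (∑ i ∈ Finset.Icc 1 p, φ i * γ (i : ℤ)) + σ2)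
    (hYW : ∀ j : ℤ, 1 ≤ j → γ j = ∑ i ∈ Finset.Icc 1 p, φ i * γ (j - (i : ℤ)))
    (Γ : (m : ℕ) → Matrix (Fin m) (Fin m) ℝ)
    (hΓ : ∀ m : ℕ, ∀ i j : Fin m, Γ m i j = γ |(i : ℤ) - (j : ℤ)|)
    (hpd : ∀ m : ℕ, 1 ≤ m → (Γ m).PosDef)
    (m : ℕ) (hm : p + 1 ≤ m) (i j : ℕ) (hi1 : 1 ≤ i) (hi2 : i ≤ m - p)
    (hj1 : 1 ≤ j) (hj2 : j ≤ m - p) (hij : (p : ℤ) < |(i : ℤ) - (j : ℤ)|) :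
    σ2 * (Γ m)⁻¹ ⟨p + i - 1, by omega⟩ ⟨p + j - 1, by omega⟩ = 0 := by
  have hpm : p ≤ m := by omega
  have habs : ∀ x : ℤ, γ |x| = γ x := by
    intro x
    rcases abs_choice x with h | h
    · rw [h]
    · rw [h, hsym]
  have hΓ' : ∀ n : ℕ, ∀ x y : Fin n, Γ n x y = γ ((x : ℤ) - y) := by
    intro n x y; rw [hΓ, habs]
  have hγflip : ∀ x y : ℤ, γ (x - y) = γ (y - x) := by
    intro x y; rw [show x - y = -(y - x) by ring, hsym]
  set L := Lmat p φ m with hLdef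
  set Mm := Mmat p σ2 γ m with hMdef
  set G := (Γ p)⁻¹ with hGdef
  set Nn := Nmat p σ2 G m with hNdef
  have hLup : ∀ {t b : Fin m}, (t : ℕ) < (b : ℕ) → L t b = 0 := fun h => Lmat_upper h
  have hLdg : ∀ t : Fin m, L t t = 1 := fun t => Lmat_diag t
  -- inner sum lemmas
  have rowsum : ∀ t a : Fin m, p ≤ (t : ℕ) → (a : ℕ) ≤ (t : ℕ) →
      ∑ b : Fin m, L t b * Γ m b a = if (a : ℕ) = (t : ℕ) then σ2 else 0 := by
    intro t a ht ha
    calc ∑ b : Fin m, L t b * Γ m b a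
        = ∑ b : Fin m, (fun k : ℕ => γ ((a : ℤ) - k) * arc p φ ((t : ℤ) - k)) (b : ℕ) := by
          refine Finset.sum_congr rfl fun b _ => ?_
          rw [hLdef, Lmat_apply, if_neg (by omega), hΓ' m b a, hγflip]
          ring
      _ = ∑ k ∈ Finset.range m, γ ((a : ℤ) - k) * arc p φ ((t : ℤ) - k) :=
          Fin.sum_univ_eq_sum_range (fun k : ℕ => γ ((a : ℤ) - k) * arc p φ ((t : ℤ) - k)) m
      _ = if (a : ℕ) = (t : ℕ) then σ2 else 0 :=
          key p hp φ σ2 γ hsym hYW0 hYW m t a ht t.isLt ha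
  have colsum : ∀ s b : Fin m, p ≤ (s : ℕ) → (b : ℕ) ≤ (s : ℕ) →
      ∑ a : Fin m, Γ m b a * L s a = if (b : ℕ) = (s : ℕ) then σ2 else 0 := by
    intro s b hs hb
    calc ∑ a : Fin m, Γ m b a * L s a
        = ∑ a : Fin m, (fun k : ℕ => γ ((b : ℤ) - k) * arc p φ ((s : ℤ) - k)) (a : ℕ) := by
          refine Finset.sum_congr rfl fun a _ => ?_
          rw [hLdef, Lmat_apply, if_neg (by omega), hΓ' m b a]
      _ = ∑ k ∈ Finset.range m, γ ((b : ℤ) - k) * arc p φ ((s : ℤ) - k) :=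
          Fin.sum_univ_eq_sum_range (fun k : ℕ => γ ((b : ℤ) - k) * arc p φ ((s : ℤ) - k)) m
      _ = if (b : ℕ) = (s : ℕ) then σ2 else 0 :=
          key p hp φ σ2 γ hsym hYW0 hYW m s b hs s.isLt hb
  have deltarow : ∀ t a : Fin m, (t : ℕ) < p → ∑ b : Fin m, L t b * Γ m b a = Γ m t a := by
    intro t a ht
    rw [Finset.sum_eq_single t]
    · rw [hLdef, Lmat_apply, if_pos ht, if_pos rfl, one_mul]
    · intro b _ hb
      rw [hLdef, Lmat_apply, if_pos ht, if_neg hb, zero_mul]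
    · intro h; exact absurd (Finset.mem_univ t) h
  -- the key congruence: L * Γ m * Lᵀ = Mm
  have hLGL : L * Γ m * Lᵀ = Mm := by
    ext t s
    simp only [Matrix.mul_apply, Matrix.transpose_apply]
    by_cases htp : (t : ℕ) < p
    · by_cases hsp : (s : ℕ) < p
      · -- both in top block
        have e : ∀ a : Fin m, (∑ b : Fin m, L t b * Γ m b a) * L s a
            = Γ m t a * (if a = s then 1 else 0) := by
          intro a
          rw [deltarow t a htp, hLdef, Lmat, Matrix.of_apply, if_pos hsp]
        rw [Finset.sum_congr rfl fun a _ => e a]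
        simp only [mul_ite, mul_one, mul_zero, Finset.sum_ite_eq', Finset.mem_univ, if_pos]
        rw [hΓ' m t s, hMdef, Mmat_apply, if_pos ⟨htp, hsp⟩]
      · -- t in top block, s in bottom block
        have hsp' : p ≤ (s : ℕ) := le_of_not_gt hsp
        have e : ∀ a : Fin m, (∑ b : Fin m, L t b * Γ m b a) * L s a
            = Γ m t a * L s a := by
          intro a; rw [deltarow t a htp]
        rw [Finset.sum_congr rfl fun a _ => e a, colsum s t hsp' (by omega)]
        rw [if_neg (by omega), hMdef, Mmat_apply,
          if_neg (by rintro ⟨_, h⟩; omega), if_neg (by intro h; rw [h] at htp; omega)]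
    · have htp' : p ≤ (t : ℕ) := le_of_not_gt htp
      by_cases hts : (s : ℕ) ≤ (t : ℕ)
      · -- bottom-left / diagonal part via rowsum
        have e : ∀ a : Fin m, (∑ b : Fin m, L t b * Γ m b a) * L s a
            = (if a = t then σ2 else 0) * L s a := by
          intro a
          by_cases ha : (a : ℕ) ≤ (t : ℕ)
          · rw [rowsum t a htp' ha]
            congr 1
            simp only [Fin.ext_iff]
          · rw [hLup (by omega), mul_zero, mul_zero]
        rw [Finset.sum_congr rfl fun a _ => e a]
        simp only [ite_mul, zero_mul, Finset.sum_ite_eq', Finset.mem_univ, if_pos]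
        rcases eq_or_lt_of_le hts with heq | hlt
        · have : s = t := Fin.ext heq
          subst this
          rw [hLdg, mul_one, hMdef, Mmat_apply,
            if_neg (by rintro ⟨h, _⟩; omega), if_pos rfl]
        · rw [hLup hlt, mul_zero, hMdef, Mmat_apply,
            if_neg (by rintro ⟨h, _⟩; omega), if_neg (by intro h; rw [h] at hlt; omega)]
      · -- t < s, swap summation order and use colsum
        have hst : (t : ℕ) < (s : ℕ) := lt_of_not_ge hts
        have hsp' : p ≤ (s : ℕ) := by omega
        simp only [Finset.sum_mul]
        rw [Finset.sum_comm]
        have e : ∀ b : Fin m, (∑ a : Fin m, L t b * Γ m b a * L s a)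
            = L t b * (if b = s then σ2 else 0) := by
          intro b
          by_cases hb : (b : ℕ) ≤ (s : ℕ)
          · have h' : (∑ a : Fin m, L t b * Γ m b a * L s a)
                = L t b * ∑ a : Fin m, Γ m b a * L s a := by
              rw [Finset.mul_sum]; exact Finset.sum_congr rfl fun a _ => by ring
            rw [h', colsum s b hsp' hb]
            congr 1
            simp only [Fin.ext_iff]
          · have : L t b = 0 := hLup (by omega)
            rw [this]
            simp only [zero_mul, Finset.sum_const_zero]
        rw [Finset.sum_congr rfl fun b _ => e b]
        simp only [mul_ite, mul_zero, Finset.sum_ite_eq', Finset.mem_univ, if_pos]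
        rw [hLup hst, zero_mul, hMdef, Mmat_apply,
          if_neg (by rintro ⟨h, _⟩; omega), if_neg (by intro h; rw [h] at hst; omega)]
  -- Γ p is invertible
  have hpdp := hpd p hp
  have hdetp : IsUnit (Γ p).det := isUnit_iff_ne_zero.2 (ne_of_gt hpdp.det_pos)
  have hGpG : Γ p * G = 1 := Matrix.mul_nonsing_inv _ hdetp
  have hG : ∀ t s : Fin p, ∑ a : Fin p, γ ((t : ℤ) - a) * G a s
      = if t = s then 1 else 0 := by
    intro t s
    calc ∑ a : Fin p, γ ((t : ℤ) - a) * G a s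
        = ∑ a : Fin p, Γ p t a * G a s :=
          Finset.sum_congr rfl fun a _ => by rw [hΓ' p t a]
      _ = (Γ p * G) t s := (Matrix.mul_apply).symm
      _ = (1 : Matrix (Fin p) (Fin p) ℝ) t s := by rw [hGpG]
      _ = if t = s then 1 else 0 := Matrix.one_apply
  -- Mm * Nn = 1
  have hMN : Mm * Nn = 1 := by
    ext t s
    rw [Matrix.mul_apply]
    by_cases ht : (t : ℕ) < p
    · by_cases hs : (s : ℕ) < p
      · have hzero : ∀ a : Fin m, p ≤ (a : ℕ) → Mm t a * Nn a s = 0 := by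
          intro a ha
          rw [hMdef, Mmat_apply, if_neg (by rintro ⟨_, h⟩; omega),
            if_neg (by intro h; rw [h] at ht; omega), zero_mul]
        rw [sum_eq_sum_castLE hpm _ hzero]
        have e : ∀ a : Fin p, Mm t (Fin.castLE hpm a) * Nn (Fin.castLE hpm a) s
            = γ ((t : ℤ) - a) * G a ⟨(s : ℕ), hs⟩ := by
          intro a
          rw [hMdef, Mmat_apply, if_pos ⟨ht, a.isLt⟩,
            hNdef, Nmat_apply, dif_pos ⟨a.isLt, hs⟩]
          congr 1
        rw [Finset.sum_congr rfl fun a _ => e a, hG ⟨(t : ℕ), ht⟩ ⟨(s : ℕ), hs⟩,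
          Matrix.one_apply]
        by_cases hts : t = s
        · rw [if_pos hts, if_pos (by subst hts; rfl)]
        · rw [if_neg hts, if_neg (by
          intro h
          have h2 := congrArg Fin.val h
          exact hts (Fin.ext h2))]
      · rw [Finset.sum_eq_zero, Matrix.one_apply,
          if_neg (by intro h; rw [h] at ht; omega)]
        intro a _
        by_cases ha : (a : ℕ) < p
        · rw [hNdef, Nmat_apply, dif_neg (by rintro ⟨_, h⟩; omega),
            if_neg (by intro h; rw [h] at ha; omega), mul_zero]
        · rw [hMdef, Mmat_apply, if_neg (by rintro ⟨_, h⟩; omega),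
            if_neg (by intro h; rw [h] at ht; omega), zero_mul]
    · have e : ∀ a : Fin m, Mm t a * Nn a s = (if t = a then σ2 else 0) * Nn a s := by
        intro a
        rw [hMdef, Mmat_apply, if_neg (by rintro ⟨h, _⟩; omega)]
      rw [Finset.sum_congr rfl fun a _ => e a]
      simp only [ite_mul, zero_mul, Finset.sum_ite_eq, Finset.mem_univ, if_pos]
      rw [hNdef, Nmat_apply, dif_neg (by rintro ⟨h, _⟩; omega)]
      by_cases hts : t = s
      · rw [if_pos hts, Matrix.one_apply, if_pos hts, mul_inv_cancel₀ (ne_of_gt hσ)]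
      · rw [if_neg hts, mul_zero, Matrix.one_apply, if_neg hts]
  have hNM : Nn * Mm = 1 := mul_eq_one_comm.mp hMN
  -- L is invertible (det = 1)
  have hLtri : L.BlockTriangular OrderDual.toDual := by
    intro a b hab
    exact hLup (by exact_mod_cast hab)
  have hdetL : L.det = 1 := by
    rw [Matrix.det_of_lowerTriangular L hLtri]
    exact Finset.prod_eq_one fun t _ => hLdg t
  have hdetLT : IsUnit Lᵀ.det := by
    rw [Matrix.det_transpose, hdetL]; exact isUnit_one
  -- conclude (Γ m)⁻¹ = Lᵀ * Nn * L
  have e1 : Lᵀ * Nn * L * Γ m * Lᵀ = Lᵀ := by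
    rw [mul_assoc (Lᵀ * Nn) L (Γ m), mul_assoc (Lᵀ * Nn) (L * Γ m) Lᵀ,
      hLGL, mul_assoc, hNM, mul_one]
  have hXG : Lᵀ * Nn * L * Γ m = 1 := by
    have h2 := Matrix.mul_nonsing_inv_cancel_right Lᵀ (Lᵀ * Nn * L * Γ m) hdetLT
    rw [e1] at h2
    rw [← h2, Matrix.mul_nonsing_inv _ hdetLT]
  have hInv : (Γ m)⁻¹ = Lᵀ * Nn * L := Matrix.inv_eq_left_inv hXG
  rw [hInv]
  set k : Fin m := ⟨p + i - 1, by omega⟩ with hk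
  set l : Fin m := ⟨p + j - 1, by omega⟩ with hl
  have hkval : (k : ℕ) = p + i - 1 := rfl
  have hlval : (l : ℕ) = p + j - 1 := rfl
  have : (Lᵀ * Nn * L) k l = 0 := by
    rw [Matrix.mul_apply]
    refine Finset.sum_eq_zero fun s _ => ?_
    rw [Matrix.mul_apply, Finset.sum_mul]
    refine Finset.sum_eq_zero fun t _ => ?_
    rw [Matrix.transpose_apply]
    by_cases ht : (t : ℕ) < p
    · rw [hLdef, Lmat_apply, if_pos ht,
        if_neg (by
          intro h
          have h2 : (k : ℕ) = (t : ℕ) := congrArg Fin.val h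
          rw [hkval] at h2; omega), zero_mul, zero_mul]
    · by_cases hts : t = s
      · subst hts
        rcases eq_or_ne (L t k) 0 with h0 | h0
        · rw [h0, zero_mul, zero_mul]
        rcases eq_or_ne (L t l) 0 with h1 | h1
        · rw [h1, mul_zero]
        exfalso
        have hLk : L t k = arc p φ ((t : ℤ) - k) := by
          rw [hLdef, Lmat_apply, if_neg ht]
        have hLl : L t l = arc p φ ((t : ℤ) - l) := by
          rw [hLdef, Lmat_apply, if_neg ht]
        rw [hLk] at h0; rw [hLl] at h1
        obtain ⟨hk1, hk2⟩ := arc_support h0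
        obtain ⟨hl1, hl2⟩ := arc_support h1
        have hkk : ((k : ℕ) : ℤ) = (p : ℤ) + i - 1 := by
          rw [hkval]; omega
        have hll : ((l : ℕ) : ℤ) = (p : ℤ) + j - 1 := by
          rw [hlval]; omega
        have habsle : |(i : ℤ) - j| ≤ (p : ℤ) := by
          rw [abs_le]; constructor <;> omega
        omega
      · rw [hNdef, Nmat_apply, dif_neg (by rintro ⟨h, _⟩; omega),
          if_neg hts, mul_zero, zero_mul]
  rw [this, mul_zero]
end

section
/- Recursion for the rolling average variance (Theorem: Asymptotic Distribution of Rolling Average, algebraic content): with s_{p,m} := (1/(m−p)²) · Σ_{i=1}^{m−p} Σ_{j=1}^{m−p} NLRC_{p,m}(i,j), one has s_{p,p+1} = 1, and for every integer m ≥ p+2, (m−p)² · s_{p,m} = (m−p−1)² · s_{p,m−1} + (φ₀ + φ₁ + ⋯ + φ_{min(m−p−1, p)})², where φ₀ := −1. -/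
open Matrix Finset

namespace Stmt14Aux

def Amat (p : ℕ) (φ : ℕ → ℝ) (m : ℕ) : Matrix (Fin m) (Fin m) ℝ :=
  Matrix.of fun s t =>
    if (s : ℕ) < p then (if s = t then 1 else 0)
    else if (t : ℕ) ≤ (s : ℕ) ∧ (s : ℕ) ≤ (t : ℕ) + p then -φ ((s : ℕ) - (t : ℕ)) else 0

lemma Amat_apply (p : ℕ) (φ : ℕ → ℝ) (m : ℕ) (s t : Fin m) :
    Amat p φ m s t =
      if (s : ℕ) < p then (if s = t then 1 else 0)
      else if (t : ℕ) ≤ (s : ℕ) ∧ (s : ℕ) ≤ (t : ℕ) + p then -φ ((s : ℕ) - (t : ℕ)) else 0 := rfl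

lemma Amat_lower (p : ℕ) (φ : ℕ → ℝ) (m : ℕ) (s t : Fin m) (h : (s : ℕ) < (t : ℕ)) :
    Amat p φ m s t = 0 := by
  rw [Amat_apply]
  split_ifs with h1 h2 h3
  · exact absurd (Fin.val_eq_of_eq h2) (by omega)
  · rfl
  · omega
  · rfl

lemma Amat_diag (p : ℕ) (φ : ℕ → ℝ) (hφ0 : φ 0 = -1) (m : ℕ) (s : Fin m) :
    Amat p φ m s s = 1 := by
  rw [Amat_apply]
  split_ifs with h1 h2 h3
  · rfl
  · exact absurd rfl h2
  · simp [hφ0]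
  · omega

lemma Amat_inv_mul (p : ℕ) (φ : ℕ → ℝ) (hφ0 : φ 0 = -1) (m : ℕ) :
    (Amat p φ m)⁻¹ * Amat p φ m = 1 := by
  apply Matrix.nonsing_inv_mul
  have hdet : (Amat p φ m).det = 1 := by
    rw [Matrix.det_of_lowerTriangular (Amat p φ m)
      (fun s t h => Amat_lower p φ m s t h)]
    simp [Amat_diag p φ hφ0 m]
  rw [hdet]; exact isUnit_one


lemma gabs (γ : ℤ → ℝ) (hsym : ∀ j : ℤ, γ (-j) = γ j) (x : ℤ) : γ |x| = γ x := by
  rcases abs_choice x with h | h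
  · rw [h]
  · rw [h, hsym]

lemma Icc_to_range (p : ℕ) (f : ℕ → ℝ) :
    ∑ i ∈ Finset.Icc 1 p, f i = ∑ k ∈ Finset.range p, f (k + 1) := by
  rw [← Finset.Ico_add_one_right_eq_Icc, Finset.sum_Ico_eq_sum_range]
  simp [Nat.add_comm]

lemma Ftilde (p : ℕ) (φ : ℕ → ℝ) (hφ0 : φ 0 = -1) (σ2 : ℝ) (γ : ℤ → ℝ)
    (hsym : ∀ j : ℤ, γ (-j) = γ j)
    (hYW0 : γ 0 = (∑ i ∈ Finset.Icc 1 p, φ i * γ (i : ℤ)) + σ2)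
    (hYW : ∀ j : ℤ, 1 ≤ j → γ j = ∑ i ∈ Finset.Icc 1 p, φ i * γ (j - (i : ℤ)))
    (x : ℤ) (hx : x ≤ 0) :
    ∑ k ∈ Finset.range (p + 1), φ k * γ (x + k) = if x = 0 then -σ2 else 0 := by
  rw [Finset.sum_range_succ']
  rcases eq_or_lt_of_le hx with h0 | hneg
  · subst h0
    rw [if_pos rfl]
    have : ∑ k ∈ Finset.range p, φ (k + 1) * γ ((0 : ℤ) + (k + 1 : ℕ)) =
        ∑ i ∈ Finset.Icc 1 p, φ i * γ (i : ℤ) := by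
      rw [Icc_to_range p (fun i => φ i * γ (i : ℤ))]
      apply Finset.sum_congr rfl
      intro k _
      congr 1
      push_cast
      ring
    rw [this, hφ0]
    simp only [Nat.cast_zero, add_zero, Nat.cast_ofNat]
    rw [hYW0]
    ring
  · rw [if_neg (by omega)]
    have h1 : (1 : ℤ) ≤ -x := by omega
    have hyw := hYW (-x) h1
    have hIcc : ∑ i ∈ Finset.Icc 1 p, φ i * γ (-x - (i : ℤ)) =
        ∑ i ∈ Finset.Icc 1 p, φ i * γ (x + (i : ℤ)) := by
      apply Finset.sum_congr rfl
      intro i _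
      congr 1
      rw [show -x - (i : ℤ) = -(x + i) by ring, hsym]
    have hrange : ∑ k ∈ Finset.range p, φ (k + 1) * γ (x + (k + 1 : ℕ)) =
        ∑ i ∈ Finset.Icc 1 p, φ i * γ (x + (i : ℤ)) :=
      (Icc_to_range p (fun i => φ i * γ (x + (i : ℤ)))).symm
    rw [hrange, ← hIcc, ← hyw, hφ0, hsym]
    push_cast
    ring


lemma sum_shift (p m : ℕ) (t : Fin m) (ht : p ≤ (t : ℕ)) (c : ℕ → ℝ) (F : Fin m → ℝ) :
    ∑ v : Fin m, (if (v : ℕ) ≤ (t : ℕ) ∧ (t : ℕ) ≤ (v : ℕ) + p then c ((t : ℕ) - (v : ℕ)) else 0) * F v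
      = ∑ k ∈ Finset.range (p + 1), c k * F ⟨(t : ℕ) - k, lt_of_le_of_lt (Nat.sub_le _ _) t.isLt⟩ := by
  simp only [ite_mul, zero_mul]
  rw [Finset.sum_ite, Finset.sum_const_zero, add_zero]
  apply Finset.sum_bij' (i := fun (v : Fin m) _ => (t : ℕ) - (v : ℕ))
    (j := fun (k : ℕ) _ => (⟨(t : ℕ) - k, lt_of_le_of_lt (Nat.sub_le _ _) t.isLt⟩ : Fin m))
  · intro v hv
    simp only [Finset.mem_filter, Finset.mem_univ, true_and] at hv
    simp only [Finset.mem_range]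
    omega
  · intro k hk
    simp only [Finset.mem_range] at hk
    simp only [Finset.mem_filter, Finset.mem_univ, true_and]
    omega
  · intro v hv
    simp only [Finset.mem_filter, Finset.mem_univ, true_and] at hv
    apply Fin.ext
    simp only []
    omega
  · intro k hk
    simp only [Finset.mem_range] at hk
    simp only []
    omega
  · intro v hv
    simp only [Finset.mem_filter, Finset.mem_univ, true_and] at hv
    congr 1
    apply congrArg
    apply Fin.ext
    simp only []
    omega


-- paste previous defs for testing
lemma GammaAT (p : ℕ) (φ : ℕ → ℝ) (γ : ℤ → ℝ) (hsym : ∀ j : ℤ, γ (-j) = γ j)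
    (m : ℕ) (Γ : Matrix (Fin m) (Fin m) ℝ) (hΓ : ∀ i j : Fin m, Γ i j = γ |(i : ℤ) - (j : ℤ)|)
    (u t : Fin m) (ht : p ≤ (t : ℕ)) :
    (Γ * (Amat p φ m)ᵀ) u t
      = -∑ k ∈ Finset.range (p + 1), φ k * γ ((u : ℤ) - (t : ℤ) + k) := by
  rw [Matrix.mul_apply]
  have hterm : ∀ v : Fin m, Γ u v * (Amat p φ m)ᵀ v t =
      (if (v : ℕ) ≤ (t : ℕ) ∧ (t : ℕ) ≤ (v : ℕ) + p then (fun k => -φ k) ((t : ℕ) - (v : ℕ)) else 0)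
        * γ ((u : ℤ) - (v : ℤ)) := by
    intro v
    rw [Matrix.transpose_apply, Amat_apply, if_neg (by omega), hΓ, gabs γ hsym]
    split_ifs with h
    · ring
    · ring
  rw [Finset.sum_congr rfl (fun v _ => hterm v),
    sum_shift p m t ht (fun k => -φ k) (fun v => γ ((u : ℤ) - (v : ℤ)))]
  rw [← Finset.sum_neg_distrib]
  apply Finset.sum_congr rfl
  intro k hk
  simp only [Finset.mem_range] at hk
  have harg : (u : ℤ) - ((⟨(t : ℕ) - k, lt_of_le_of_lt (Nat.sub_le _ _) t.isLt⟩ : Fin m) : ℤ)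
      = (u : ℤ) - (t : ℤ) + k := by
    have h1 : (((⟨(t : ℕ) - k, lt_of_le_of_lt (Nat.sub_le _ _) t.isLt⟩ : Fin m) : ℤ))
        = (((t : ℕ) - k : ℕ) : ℤ) := rfl
    rw [h1]
    omega
  rw [harg]
  ring


lemma D_col (p : ℕ) (φ : ℕ → ℝ) (hφ0 : φ 0 = -1) (σ2 : ℝ) (γ : ℤ → ℝ)
    (hsym : ∀ j : ℤ, γ (-j) = γ j)
    (hYW0 : γ 0 = (∑ i ∈ Finset.Icc 1 p, φ i * γ (i : ℤ)) + σ2)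
    (hYW : ∀ j : ℤ, 1 ≤ j → γ j = ∑ i ∈ Finset.Icc 1 p, φ i * γ (j - (i : ℤ)))
    (m : ℕ) (Γ : Matrix (Fin m) (Fin m) ℝ) (hΓ : ∀ i j : Fin m, Γ i j = γ |(i : ℤ) - (j : ℤ)|)
    (s t : Fin m) (ht : p ≤ (t : ℕ)) (hst : (s : ℕ) ≤ (t : ℕ)) :
    (Amat p φ m * Γ * (Amat p φ m)ᵀ) s t = if s = t then σ2 else 0 := by
  rw [Matrix.mul_assoc, Matrix.mul_apply]
  by_cases hs : (s : ℕ) < p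
  · -- identity row
    have hterm : ∀ u : Fin m, Amat p φ m s u * (Γ * (Amat p φ m)ᵀ) u t =
        if s = u then (Γ * (Amat p φ m)ᵀ) u t else 0 := by
      intro u
      rw [Amat_apply, if_pos hs]
      split_ifs <;> ring
    rw [Finset.sum_congr rfl (fun u _ => hterm u), Finset.sum_ite_eq]
    rw [if_pos (Finset.mem_univ s), GammaAT p φ γ hsym m Γ hΓ s t ht]
    rw [Ftilde p φ hφ0 σ2 γ hsym hYW0 hYW _ (by omega)]
    rw [if_neg (by omega), if_neg (by
      intro h
      rw [h] at hs
      omega)]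
    ring
  · -- φ row
    push_neg at hs
    have hterm : ∀ u : Fin m, Amat p φ m s u * (Γ * (Amat p φ m)ᵀ) u t =
        (if (u : ℕ) ≤ (s : ℕ) ∧ (s : ℕ) ≤ (u : ℕ) + p then (fun k => -φ k) ((s : ℕ) - (u : ℕ)) else 0)
          * (-(∑ k ∈ Finset.range (p + 1), φ k * γ ((u : ℤ) - (t : ℤ) + k))) := by
      intro u
      rw [Amat_apply, if_neg (by omega), GammaAT p φ γ hsym m Γ hΓ u t ht]
    rw [Finset.sum_congr rfl (fun u _ => hterm u),
      sum_shift p m s hs (fun k => -φ k)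
        (fun u => -(∑ k ∈ Finset.range (p + 1), φ k * γ ((u : ℤ) - (t : ℤ) + k)))]
    have hterm2 : ∀ k ∈ Finset.range (p + 1),
        (fun k => -φ k) k * (fun (u : Fin m) => -(∑ j ∈ Finset.range (p + 1), φ j * γ ((u : ℤ) - (t : ℤ) + j)))
            ⟨(s : ℕ) - k, lt_of_le_of_lt (Nat.sub_le _ _) s.isLt⟩
          = if ((s : ℕ) = (t : ℕ) ∧ k = 0) then σ2 else 0 := by
      intro k hk
      simp only [Finset.mem_range] at hk
      have hcast : (((⟨(s : ℕ) - k, lt_of_le_of_lt (Nat.sub_le _ _) s.isLt⟩ : Fin m) : ℤ))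
          = (((s : ℕ) - k : ℕ) : ℤ) := rfl
      simp only [neg_mul, neg_neg]
      have harg : ∀ j : ℕ, ((⟨(s : ℕ) - k, lt_of_le_of_lt (Nat.sub_le _ _) s.isLt⟩ : Fin m) : ℤ)
          - (t : ℤ) + j = ((s : ℤ) - (t : ℤ) - k) + j := by
        intro j
        rw [hcast]
        omega
      rw [Finset.sum_congr rfl (fun j _ => by rw [harg j]),
        Ftilde p φ hφ0 σ2 γ hsym hYW0 hYW _ (by omega)]
      by_cases hc : (s : ℕ) = (t : ℕ) ∧ k = 0
      · rw [if_pos (by omega), if_pos hc, hc.2, hφ0]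
        ring
      · rw [if_neg (by omega), if_neg hc]
        ring
    rw [Finset.sum_congr rfl hterm2]
    by_cases hc : (s : ℕ) = (t : ℕ)
    · have : s = t := Fin.ext hc
      subst this
      simp
    · rw [if_neg (fun h => hc (congrArg Fin.val h))]
      simp [hc]


lemma D_col_full (p : ℕ) (φ : ℕ → ℝ) (hφ0 : φ 0 = -1) (σ2 : ℝ) (γ : ℤ → ℝ)
    (hsym : ∀ j : ℤ, γ (-j) = γ j)
    (hYW0 : γ 0 = (∑ i ∈ Finset.Icc 1 p, φ i * γ (i : ℤ)) + σ2)
    (hYW : ∀ j : ℤ, 1 ≤ j → γ j = ∑ i ∈ Finset.Icc 1 p, φ i * γ (j - (i : ℤ)))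
    (m : ℕ) (Γ : Matrix (Fin m) (Fin m) ℝ) (hΓ : ∀ i j : Fin m, Γ i j = γ |(i : ℤ) - (j : ℤ)|)
    (s t : Fin m) (ht : p ≤ (t : ℕ)) :
    (Amat p φ m * Γ * (Amat p φ m)ᵀ) s t = if s = t then σ2 else 0 := by
  rcases le_or_gt (s : ℕ) (t : ℕ) with h | h
  · exact D_col p φ hφ0 σ2 γ hsym hYW0 hYW m Γ hΓ s t ht h
  · -- use symmetry
    have hΓsym : Γᵀ = Γ := by
      ext i j
      rw [Matrix.transpose_apply, hΓ, hΓ, abs_sub_comm]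
    have hDsym : (Amat p φ m * Γ * (Amat p φ m)ᵀ)ᵀ = Amat p φ m * Γ * (Amat p φ m)ᵀ := by
      rw [Matrix.transpose_mul, Matrix.transpose_mul, Matrix.transpose_transpose, hΓsym,
        Matrix.mul_assoc]
    have := congrFun (congrFun hDsym t) s
    rw [Matrix.transpose_apply] at this
    rw [this, D_col p φ hφ0 σ2 γ hsym hYW0 hYW m Γ hΓ t s (by omega) (by omega)]
    rw [if_neg (fun hh => by rw [hh] at h; omega),
      if_neg (fun hh => by rw [hh] at h; omega)]

lemma key3 (p : ℕ) (φ : ℕ → ℝ) (hφ0 : φ 0 = -1) (σ2 : ℝ) (γ : ℤ → ℝ)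
    (hsym : ∀ j : ℤ, γ (-j) = γ j)
    (hYW0 : γ 0 = (∑ i ∈ Finset.Icc 1 p, φ i * γ (i : ℤ)) + σ2)
    (hYW : ∀ j : ℤ, 1 ≤ j → γ j = ∑ i ∈ Finset.Icc 1 p, φ i * γ (j - (i : ℤ)))
    (m : ℕ) (Γ : Matrix (Fin m) (Fin m) ℝ) (hΓ : ∀ i j : Fin m, Γ i j = γ |(i : ℤ) - (j : ℤ)|)
    (i j : Fin m) (hj : p ≤ (j : ℕ)) :
    (Γ * ((Amat p φ m)ᵀ * Amat p φ m)) i j = σ2 * (if i = j then 1 else 0) := by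
  set A := Amat p φ m with hA
  have hinv : A⁻¹ * A = 1 := by rw [hA]; exact Amat_inv_mul p φ hφ0 m
  have hDA : ∀ t : Fin m, ((A * Γ * Aᵀ) * A) t j = σ2 * A t j := by
    intro t
    rw [Matrix.mul_apply]
    have hterm : ∀ u : Fin m, (A * Γ * Aᵀ) t u * A u j =
        if u = t then σ2 * A u j else 0 := by
      intro u
      rcases lt_or_ge (u : ℕ) p with hu | hu
      · have hAuj : A u j = 0 := by
          rw [hA, Amat_apply, if_pos hu, if_neg (fun hh => by rw [hh] at hu; omega)]
        rw [hAuj, mul_zero]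
        split_ifs <;> simp [hAuj]
      · rw [D_col_full p φ hφ0 σ2 γ hsym hYW0 hYW m Γ hΓ t u hu]
        by_cases hc : u = t
        · rw [if_pos hc.symm, if_pos hc]
        · rw [if_neg (fun hh => hc hh.symm), if_neg hc, zero_mul]
    rw [Finset.sum_congr rfl (fun u _ => hterm u), Finset.sum_ite_eq' Finset.univ t,
      if_pos (Finset.mem_univ t)]
  have hassoc : Γ * (Aᵀ * A) = A⁻¹ * ((A * Γ * Aᵀ) * A) := by
    have h1 : (A * Γ * Aᵀ) * A = A * (Γ * (Aᵀ * A)) := by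
      rw [Matrix.mul_assoc (A * Γ), Matrix.mul_assoc A Γ (Aᵀ * A)]
    rw [h1, ← Matrix.mul_assoc A⁻¹ A (Γ * (Aᵀ * A)), hinv, Matrix.one_mul]
  rw [hassoc, Matrix.mul_apply]
  have : ∀ t : Fin m, A⁻¹ i t * ((A * Γ * Aᵀ) * A) t j = σ2 * (A⁻¹ i t * A t j) := by
    intro t
    rw [hDA t]
    ring
  rw [Finset.sum_congr rfl (fun t _ => this t), ← Finset.mul_sum, ← Matrix.mul_apply,
    hinv, Matrix.one_apply]


lemma key4 (p : ℕ) (φ : ℕ → ℝ) (hφ0 : φ 0 = -1) (σ2 : ℝ) (γ : ℤ → ℝ)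
    (hsym : ∀ j : ℤ, γ (-j) = γ j)
    (hYW0 : γ 0 = (∑ i ∈ Finset.Icc 1 p, φ i * γ (i : ℤ)) + σ2)
    (hYW : ∀ j : ℤ, 1 ≤ j → γ j = ∑ i ∈ Finset.Icc 1 p, φ i * γ (j - (i : ℤ)))
    (m : ℕ) (Γ : Matrix (Fin m) (Fin m) ℝ) (hΓ : ∀ i j : Fin m, Γ i j = γ |(i : ℤ) - (j : ℤ)|)
    (hpdm : Γ.PosDef)
    (i j : Fin m) (hj : p ≤ (j : ℕ)) :
    σ2 * Γ⁻¹ i j = ((Amat p φ m)ᵀ * Amat p φ m) i j := by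
  have hdet : IsUnit Γ.det := isUnit_iff_ne_zero.2 hpdm.det_pos.ne'
  have h1 : Γ⁻¹ * (Γ * ((Amat p φ m)ᵀ * Amat p φ m)) = (Amat p φ m)ᵀ * Amat p φ m := by
    rw [← Matrix.mul_assoc, Matrix.nonsing_inv_mul Γ hdet, Matrix.one_mul]
  calc σ2 * Γ⁻¹ i j
      = ∑ t : Fin m, Γ⁻¹ i t * (σ2 * (if t = j then 1 else 0)) := by
        simp only [mul_ite, mul_one, mul_zero, Finset.sum_ite_eq', Finset.mem_univ, if_true]
        ring
    _ = ∑ t : Fin m, Γ⁻¹ i t * (Γ * ((Amat p φ m)ᵀ * Amat p φ m)) t j := by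
        apply Finset.sum_congr rfl
        intro t _
        rw [key3 p φ hφ0 σ2 γ hsym hYW0 hYW m Γ hΓ t j hj]
    _ = ((Amat p φ m)ᵀ * Amat p φ m) i j := by
        rw [← Matrix.mul_apply, h1]

lemma rowsum (p : ℕ) (φ : ℕ → ℝ) (m : ℕ) (hm : p + 1 ≤ m) (s : Fin m) (hs : p ≤ (s : ℕ)) :
    ∑ i : Fin (m - p), Amat p φ m s ⟨p + i, by have := i.isLt; omega⟩
      = -(∑ k ∈ Finset.range (min ((s : ℕ) - p) p + 1), φ k) := by
  have hterm : ∀ i : Fin (m - p), Amat p φ m s ⟨p + i, by have := i.isLt; omega⟩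
      = if (p + (i : ℕ) ≤ (s : ℕ) ∧ (s : ℕ) ≤ p + (i : ℕ) + p) then -φ ((s : ℕ) - (p + (i : ℕ))) else 0 := by
    intro i
    rw [Amat_apply, if_neg (by omega)]
  rw [Finset.sum_congr rfl (fun i _ => hterm i), Finset.sum_ite, Finset.sum_const_zero, add_zero,
    ← Finset.sum_neg_distrib]
  apply Finset.sum_bij' (i := fun (i : Fin (m - p)) _ => (s : ℕ) - p - (i : ℕ))
    (j := fun (k : ℕ) _ => (⟨(s : ℕ) - p - k, by have := s.isLt; omega⟩ : Fin (m - p)))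
  all_goals intro a ha
  all_goals simp only [Finset.mem_filter, Finset.mem_univ, true_and, Finset.mem_range] at ha
  all_goals first
    | (simp only [Finset.mem_range]; omega)
    | (simp only [Finset.mem_filter, Finset.mem_univ, true_and]; omega)
    | (apply Fin.ext; simp only [Fin.val_mk]; omega)
    | (congr 1; omega)
    | omega
    | (rw [show (s : ℕ) - (p + (a : ℕ)) = (s : ℕ) - p - (a : ℕ) by omega])


lemma sum_formula (p : ℕ) (φ : ℕ → ℝ) (hφ0 : φ 0 = -1) (σ2 : ℝ) (γ : ℤ → ℝ)
    (hsym : ∀ j : ℤ, γ (-j) = γ j)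
    (hYW0 : γ 0 = (∑ i ∈ Finset.Icc 1 p, φ i * γ (i : ℤ)) + σ2)
    (hYW : ∀ j : ℤ, 1 ≤ j → γ j = ∑ i ∈ Finset.Icc 1 p, φ i * γ (j - (i : ℤ)))
    (m : ℕ) (Γ : Matrix (Fin m) (Fin m) ℝ) (hΓ : ∀ i j : Fin m, Γ i j = γ |(i : ℤ) - (j : ℤ)|)
    (hpdm : Γ.PosDef) (hm : p + 1 ≤ m) :
    ∑ i : Fin (m - p), ∑ j : Fin (m - p),
        σ2 * Γ⁻¹ ⟨p + i, by have := i.isLt; omega⟩ ⟨p + j, by have := j.isLt; omega⟩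
      = ∑ d ∈ Finset.range (m - p), (∑ k ∈ Finset.range (min d p + 1), φ k) ^ 2 := by
  have step1 : ∀ i j : Fin (m - p),
      σ2 * Γ⁻¹ ⟨p + i, by have := i.isLt; omega⟩ ⟨p + j, by have := j.isLt; omega⟩
        = ∑ t : Fin m, Amat p φ m t ⟨p + i, by have := i.isLt; omega⟩
            * Amat p φ m t ⟨p + j, by have := j.isLt; omega⟩ := by
    intro i j
    rw [key4 p φ hφ0 σ2 γ hsym hYW0 hYW m Γ hΓ hpdm _ _ (by simp), Matrix.mul_apply]
    simp only [Matrix.transpose_apply]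
  calc ∑ i : Fin (m - p), ∑ j : Fin (m - p),
        σ2 * Γ⁻¹ ⟨p + i, by have := i.isLt; omega⟩ ⟨p + j, by have := j.isLt; omega⟩
      = ∑ t : Fin m, (∑ i : Fin (m - p), Amat p φ m t ⟨p + i, by have := i.isLt; omega⟩)
          * (∑ j : Fin (m - p), Amat p φ m t ⟨p + j, by have := j.isLt; omega⟩) := by
        rw [Finset.sum_congr rfl (fun i _ => Finset.sum_congr rfl (fun j _ => step1 i j))]
        rw [Finset.sum_congr rfl (fun i (_ : i ∈ Finset.univ) => Finset.sum_comm)]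
        rw [Finset.sum_comm]
        apply Finset.sum_congr rfl
        intro t _
        rw [Finset.sum_mul_sum]
    _ = ∑ t : Fin m, (if p ≤ (t : ℕ)
          then (∑ k ∈ Finset.range (min ((t : ℕ) - p) p + 1), φ k) ^ 2 else 0) := by
        apply Finset.sum_congr rfl
        intro t _
        by_cases hpt : p ≤ (t : ℕ)
        · rw [rowsum p φ m hm t hpt, if_pos hpt]
          ring
        · rw [if_neg hpt]
          have hz : ∀ i : Fin (m - p), Amat p φ m t ⟨p + i, by have := i.isLt; omega⟩ = 0 := by
            intro i
            rw [Amat_apply, if_pos (by omega), if_neg (by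
              intro h
              have := congrArg Fin.val h
              simp only [Fin.val_mk] at this
              omega)]
          rw [Finset.sum_congr rfl (fun i _ => hz i), Finset.sum_const_zero, zero_mul]
    _ = ∑ n ∈ Finset.range m, (if p ≤ n
          then (∑ k ∈ Finset.range (min (n - p) p + 1), φ k) ^ 2 else 0) :=
        Fin.sum_univ_eq_sum_range
          (fun n => if p ≤ n then (∑ k ∈ Finset.range (min (n - p) p + 1), φ k) ^ 2 else 0) m
    _ = ∑ d ∈ Finset.range (m - p), (∑ k ∈ Finset.range (min d p + 1), φ k) ^ 2 := by
        conv_lhs => rw [show m = p + (m - p) by omega]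
        rw [Finset.sum_range_add]
        rw [Finset.sum_congr rfl (fun n hn => by
          rw [if_neg (by simp only [Finset.mem_range] at hn; omega)]),
          Finset.sum_const_zero, zero_add]
        apply Finset.sum_congr rfl
        intro x _
        rw [if_pos (by omega), show p + x - p = x by omega]


end Stmt14Aux

/-- Context: AR(p) coefficients `φ`, white-noise variance `σ2`, autocovariance
sequence `γ` satisfying the Yule–Walker equations, and the autocovariance
Toeplitz matrices `Γ m`, assumed positive definite for `m ≥ 1`. -/
theorem stmt_14
    (p : ℕ) (hp : 1 ≤ p)
    (φ : ℕ → ℝ) (hφ0 : φ 0 = -1)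
    (σ2 : ℝ) (hσ : 0 < σ2)
    (γ : ℤ → ℝ)
    (hsym : ∀ j : ℤ, γ (-j) = γ j)
    (hYW0 : γ 0 = (∑ i ∈ Finset.Icc 1 p, φ i * γ (i : ℤ)) + σ2)
    (hYW : ∀ j : ℤ, 1 ≤ j → γ j = ∑ i ∈ Finset.Icc 1 p, φ i * γ (j - (i : ℤ)))
    (Γ : (m : ℕ) → Matrix (Fin m) (Fin m) ℝ)
    (hΓ : ∀ m : ℕ, ∀ i j : Fin m, Γ m i j = γ |(i : ℤ) - (j : ℤ)|)
    (hpd : ∀ m : ℕ, 1 ≤ m → (Γ m).PosDef)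
    :
    let s : ℕ → ℝ := fun m =>
      (1 / ((m - p : ℕ) : ℝ) ^ 2) * ∑ i : Fin (m - p), ∑ j : Fin (m - p),
        σ2 * (Γ m)⁻¹ ⟨p + i, by have := i.isLt; omega⟩ ⟨p + j, by have := j.isLt; omega⟩
    s (p + 1) = 1 ∧
    ∀ m : ℕ, p + 2 ≤ m →
      ((m - p : ℕ) : ℝ) ^ 2 * s m
        = ((m - p - 1 : ℕ) : ℝ) ^ 2 * s (m - 1)
          + (∑ k ∈ Finset.range (min (m - p - 1) p + 1), φ k) ^ 2 := by
  intro s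
  have hfrac : ∀ X : ℝ, X ≠ 0 → ∀ T : ℝ, X ^ 2 * (1 / X ^ 2 * T) = T := by
    intro X hX T
    field_simp
  constructor
  · show (1 / (((p + 1 - p : ℕ)) : ℝ) ^ 2) * ∑ i : Fin (p + 1 - p), ∑ j : Fin (p + 1 - p),
        σ2 * (Γ (p + 1))⁻¹ ⟨p + i, by have := i.isLt; omega⟩ ⟨p + j, by have := j.isLt; omega⟩ = 1
    rw [Stmt14Aux.sum_formula p φ hφ0 σ2 γ hsym hYW0 hYW (p + 1) (Γ (p + 1)) (hΓ (p + 1))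
      (hpd (p + 1) (by omega)) (by omega)]
    rw [show p + 1 - p = 1 by omega, Finset.sum_range_one]
    norm_num [hφ0]
  · intro m hm
    show ((m - p : ℕ) : ℝ) ^ 2 * ((1 / ((m - p : ℕ) : ℝ) ^ 2) * ∑ i : Fin (m - p), ∑ j : Fin (m - p),
          σ2 * (Γ m)⁻¹ ⟨p + i, by have := i.isLt; omega⟩ ⟨p + j, by have := j.isLt; omega⟩)
        = ((m - p - 1 : ℕ) : ℝ) ^ 2 * ((1 / ((m - 1 - p : ℕ) : ℝ) ^ 2) *
            ∑ i : Fin (m - 1 - p), ∑ j : Fin (m - 1 - p),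
          σ2 * (Γ (m - 1))⁻¹ ⟨p + i, by have := i.isLt; omega⟩ ⟨p + j, by have := j.isLt; omega⟩)
          + (∑ k ∈ Finset.range (min (m - p - 1) p + 1), φ k) ^ 2
    rw [Stmt14Aux.sum_formula p φ hφ0 σ2 γ hsym hYW0 hYW m (Γ m) (hΓ m)
      (hpd m (by omega)) (by omega)]
    rw [Stmt14Aux.sum_formula p φ hφ0 σ2 γ hsym hYW0 hYW (m - 1) (Γ (m - 1)) (hΓ (m - 1))
      (hpd (m - 1) (by omega)) (by omega)]
    rw [show m - 1 - p = m - p - 1 by omega]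
    rw [hfrac _ (by
      have : (m - p : ℕ) ≠ 0 := by omega
      exact_mod_cast Nat.cast_ne_zero.2 this)]
    rw [hfrac _ (by
      have : (m - p - 1 : ℕ) ≠ 0 := by omega
      exact_mod_cast Nat.cast_ne_zero.2 this)]
    rw [show m - p = (m - p - 1) + 1 by omega, Finset.sum_range_succ]
    simp only [Nat.add_sub_cancel]
end
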